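/- arXiv:2311.09067 — 5 statements merged into one kernel-verified Lean document; each statement's English description precedes it below -/
import Mathlib

section
/- Let K be an algebraically closed field of characteristic 0. Let z, q_1, q_2, q_3 be nonzero vectors in K^3 such that q_1, q_2, q_3 are pairwise non-proportional and z is not proportional to any q_i (i.e., they are four points of ℙ^2 with z distinct from each q_i). Then there exists a nonzero homogeneous cubic form f ∈ K[x_0, x_1, x_2] with f(z) = 0 and all three first-order partial derivatives of f vanishing at q_1, at q_2 and at q_3, if and only if q_1, q_2, q_3 are linearly dependent (i.e., the three points are collinear in ℙ^2) or z lies in the span of q_i and q_j for some pair i < j (i.e., z lies on one of the lines ⟨q_1,q_2⟩, ⟨q_1,q_3⟩, ⟨q_2,q_3⟩). -/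
open MvPolynomial

section Aux
variable {K : Type*} [Field K] [CharZero K]

lemma pderiv_bind₁ {σ : Type*} [Fintype σ] [DecidableEq σ]
    (s : σ → MvPolynomial σ K) (i : σ) (p : MvPolynomial σ K) :
    pderiv i (bind₁ s p) = ∑ j, bind₁ s (pderiv j p) * pderiv i (s j) := by
  induction p using MvPolynomial.induction_on with
  | C a => simp
  | add p q hp hq => simp [hp, hq, Finset.sum_add_distrib, add_mul]
  | mul_X p j hp =>
    rw [map_mul, bind₁_X_right, pderiv_mul, hp, Finset.sum_mul]
    have : ∀ j' : σ, bind₁ s (pderiv j' (p * X j)) * pderiv i (s j')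
        = bind₁ s (pderiv j' p) * pderiv i (s j') * s j
          + (if j = j' then bind₁ s p * pderiv i (s j') else 0) := by
      intro j'
      rw [pderiv_mul, map_add, map_mul, map_mul, bind₁_X_right]
      by_cases h : j = j'
      · subst h; simp; ring
      · simp [pderiv_X_of_ne (Ne.symm h), h]; ring
    rw [Finset.sum_congr rfl fun j' _ => this j', Finset.sum_add_distrib,
      Finset.sum_ite_eq Finset.univ j (fun j' => bind₁ s p * pderiv i (s j'))]
    simp

/-- linear form with coefficient vector c -/
noncomputable def linForm (c : Fin 3 → K) : MvPolynomial (Fin 3) K := ∑ k, C (c k) * X k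

lemma eval_linForm (c x : Fin 3 → K) : eval x (linForm c) = ∑ k, c k * x k := by
  simp [linForm]

lemma pderiv_linForm (c : Fin 3 → K) (i : Fin 3) : pderiv i (linForm c) = C (c i) := by
  simp only [linForm, map_sum, pderiv_C_mul]
  rw [Finset.sum_eq_single i]
  · simp
  · intro j _ hj; simp [pderiv_X_of_ne hj]
  · simp

lemma linForm_homog (c : Fin 3 → K) : (linForm c).IsHomogeneous 1 := by
  apply MvPolynomial.IsHomogeneous.sum
  intro k _
  simpa using (isHomogeneous_X K k).C_mul (c k)

lemma linForm_ne_zero {c : Fin 3 → K} (hc : c ≠ 0) : linForm c ≠ 0 := by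
  obtain ⟨k, hk⟩ := Function.ne_iff.mp hc
  intro h
  apply hk
  have := congrArg (coeff (Finsupp.single k 1)) h
  rwa [linForm, coeff_sum, Finset.sum_eq_single k (fun j _ hj => by
      simp [coeff_C_mul, coeff_X', Finsupp.single_left_inj, (Ne.symm hj), hj])
      (by simp), coeff_C_mul, coeff_X, if_pos rfl, mul_one, coeff_zero] at this

/-- nonzero vector orthogonal to two given vectors -/
lemma exists_orth (u v : Fin 3 → K) : ∃ c : Fin 3 → K, c ≠ 0 ∧
    ∑ k, c k * u k = 0 ∧ ∑ k, c k * v k = 0 := by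
  classical
  set M : Matrix (Fin 3) (Fin 3) K := Matrix.of ![u, v, v] with hM
  have hdet : M.det = 0 := Matrix.det_zero_of_row_eq (i := 1) (j := 2) (by decide) rfl
  obtain ⟨c, hc0, hc⟩ := (Matrix.exists_mulVec_eq_zero_iff).mpr hdet
  refine ⟨c, hc0, ?_, ?_⟩
  · have := congrFun hc 0
    simpa [Matrix.mulVec, dotProduct, mul_comm, hM] using this
  · have := congrFun hc 1
    simpa [Matrix.mulVec, dotProduct, mul_comm, hM] using this

lemma fin3_third : ∀ i j : Fin 3, i ≠ j → ∃ k : Fin 3, k ≠ i ∧ k ≠ j := by decide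

lemma fin3_cases : ∀ m i j k : Fin 3, i ≠ j → k ≠ i → k ≠ j → m = i ∨ m = j ∨ m = k := by decide

lemma pderiv_eval_prod3 (a b c : Fin 3 → K) (w : Fin 3 → K) (i : Fin 3)
    (h : (∑ k, a k * w k = 0 ∧ ∑ k, b k * w k = 0) ∨
         (∑ k, a k * w k = 0 ∧ ∑ k, c k * w k = 0) ∨
         (∑ k, b k * w k = 0 ∧ ∑ k, c k * w k = 0)) :
    eval w (pderiv i (linForm a * linForm b * linForm c)) = 0 := by
  simp only [pderiv_mul, map_add, map_mul, eval_linForm]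
  rcases h with ⟨h1, h2⟩ | ⟨h1, h2⟩ | ⟨h1, h2⟩ <;> rw [h1, h2] <;> ring

lemma backward_case2 (z : Fin 3 → K) (q : Fin 3 → (Fin 3 → K))
    (i j : Fin 3) (hij : i ≠ j) (hmem : z ∈ Submodule.span K {q i, q j}) :
    ∃ f : MvPolynomial (Fin 3) K, f ≠ 0 ∧ f.IsHomogeneous 3 ∧
      eval z f = 0 ∧ ∀ (i : Fin 3) (m : Fin 3), eval (q m) (pderiv i f) = 0 := by
  obtain ⟨k, hki, hkj⟩ := fin3_third i j hij
  obtain ⟨a, ha0, hai, haj⟩ := exists_orth (q i) (q j)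
  obtain ⟨b, hb0, hbk, hbi⟩ := exists_orth (q k) (q i)
  obtain ⟨c, hc0, hck, hcj⟩ := exists_orth (q k) (q j)
  refine ⟨linForm a * linForm b * linForm c, ?_, ?_, ?_, ?_⟩
  · exact mul_ne_zero (mul_ne_zero (linForm_ne_zero ha0) (linForm_ne_zero hb0))
      (linForm_ne_zero hc0)
  · exact ((linForm_homog a).mul (linForm_homog b)).mul (linForm_homog c)
  · obtain ⟨α, β, hz⟩ := Submodule.mem_span_pair.mp hmem
    have hzL : ∑ m, a m * z m = 0 := by
      rw [← hz]
      simp only [Pi.add_apply, Pi.smul_apply, smul_eq_mul]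
      have : ∀ x, a x * (α * q i x + β * q j x)
          = α * (a x * q i x) + β * (a x * q j x) := fun x => by ring
      rw [Finset.sum_congr rfl fun x _ => this x, Finset.sum_add_distrib,
        ← Finset.mul_sum, ← Finset.mul_sum, hai, haj]
      ring
    simp [eval_linForm, hzL]
  · intro i' m
    rcases fin3_cases m i j k hij hki hkj with rfl | rfl | rfl
    · exact pderiv_eval_prod3 a b c (q m) i' (Or.inl ⟨hai, hbi⟩)
    · exact pderiv_eval_prod3 a b c (q m) i' (Or.inr (Or.inl ⟨haj, hcj⟩))
    · exact pderiv_eval_prod3 a b c (q m) i' (Or.inr (Or.inr ⟨hbk, hck⟩))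

lemma exists_orth3 {q : Fin 3 → (Fin 3 → K)} (h : ¬ LinearIndependent K q) :
    ∃ c : Fin 3 → K, c ≠ 0 ∧ ∀ m, ∑ k, c k * q m k = 0 := by
  classical
  set M : Matrix (Fin 3) (Fin 3) K := Matrix.of (fun m j => q m j) with hM
  obtain ⟨g, hg, m0, hm0⟩ := Fintype.not_linearIndependent_iff.mp h
  have hdetT : M.transpose.det = 0 := by
    rw [← Matrix.exists_mulVec_eq_zero_iff]
    refine ⟨g, fun h0 => hm0 (congrFun h0 m0), ?_⟩
    funext j
    have := congrFun hg j
    simpa [Matrix.mulVec, dotProduct, hM, Finset.sum_apply, mul_comm] using this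
  have hdet : M.det = 0 := by rw [← Matrix.det_transpose]; exact hdetT
  obtain ⟨c, hc0, hc⟩ := Matrix.exists_mulVec_eq_zero_iff.mpr hdet
  refine ⟨c, hc0, fun m => ?_⟩
  have := congrFun hc m
  simpa [Matrix.mulVec, dotProduct, hM, mul_comm] using this

lemma backward_case1 (z : Fin 3 → K) (q : Fin 3 → (Fin 3 → K))
    (h : ¬ LinearIndependent K q) :
    ∃ f : MvPolynomial (Fin 3) K, f ≠ 0 ∧ f.IsHomogeneous 3 ∧
      eval z f = 0 ∧ ∀ (i : Fin 3) (m : Fin 3), eval (q m) (pderiv i f) = 0 := by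
  obtain ⟨c, hc0, hc⟩ := exists_orth3 h
  obtain ⟨d, hd0, hdz, -⟩ := exists_orth z z
  refine ⟨linForm c * linForm c * linForm d,
    mul_ne_zero (mul_ne_zero (linForm_ne_zero hc0) (linForm_ne_zero hc0))
      (linForm_ne_zero hd0),
    ((linForm_homog c).mul (linForm_homog c)).mul (linForm_homog d), ?_, ?_⟩
  · simp [eval_linForm, hdz]
  · intro i m
    exact pderiv_eval_prod3 c c d (q m) i (Or.inl ⟨hc m, hc m⟩)

lemma coeff_pderiv (i : Fin 3) (d : Fin 3 →₀ ℕ) (p : MvPolynomial (Fin 3) K) :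
    coeff d (pderiv i p) = (d i + 1 : ℕ) * coeff (d + Finsupp.single i 1) p := by
  induction p using MvPolynomial.induction_on' with
  | add p q hp hq => simp [hp, hq, mul_add]
  | monomial s a =>
    rw [pderiv_monomial, coeff_monomial, coeff_monomial]
    by_cases h : s = d + Finsupp.single i 1
    · subst h
      rw [if_pos (add_tsub_cancel_right _ _)]
      simp [Finsupp.single_apply, mul_comm]
    · rw [if_neg h]
      by_cases h2 : s - Finsupp.single i 1 = d
      · rw [if_pos h2]
        have hsi : s i = 0 := by
          by_contra hsi
          apply h
          rw [← h2, tsub_add_cancel_of_le]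
          rwa [Finsupp.single_le_iff, Nat.one_le_iff_ne_zero]
        simp [hsi]
      · rw [if_neg h2, mul_zero]

lemma sum_eq_of_homog {n : ℕ} {p : MvPolynomial (Fin 3) K} (hp : p.IsHomogeneous n)
    {d : Fin 3 →₀ ℕ} (hd : coeff d p ≠ 0) : ∑ j : Fin 3, d j = n := by
  have h1 := hp hd
  rw [← h1, Finsupp.weight_apply, Finsupp.sum]
  rw [Finset.sum_subset (Finset.subset_univ d.support)]
  · simp
  · intro x _ hx
    simp [Finsupp.notMem_support_iff.mp hx]

lemma eval_single_homog {n : ℕ} {p : MvPolynomial (Fin 3) K} (hp : p.IsHomogeneous n)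
    (m : Fin 3) :
    eval (fun k => if k = m then (1:K) else 0) p = coeff (Finsupp.single m n) p := by
  rw [eval_eq]
  rw [Finset.sum_eq_single (Finsupp.single m n)]
  · by_cases h : Finsupp.single m n ∈ p.support
    · rw [Finset.prod_eq_one, mul_one]
      intro j hjsup
      have hjm : j = m := by
        have := Finsupp.support_single_subset hjsup
        simpa using this
      subst hjm
      simp
    · simp [MvPolynomial.notMem_support_iff.mp h]
  · intro d hd hne
    have : ∃ j, j ≠ m ∧ d j ≠ 0 := by
      by_contra hcon
      push_neg at hcon
      apply hne
      have hdm : d m = n := by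
        have hsum := sum_eq_of_homog hp (MvPolynomial.mem_support_iff.mp hd)
        rw [Finset.sum_eq_single m] at hsum
        · exact hsum
        · intro j _ hj; exact hcon j hj
        · simp
      ext j
      by_cases hj : j = m
      · subst hj; simp [hdm]
      · simp [Finsupp.single_apply, Ne.symm hj, hcon j hj]
    obtain ⟨j, hjm, hj⟩ := this
    rw [Finset.prod_eq_zero (Finsupp.mem_support_iff.mpr hj), mul_zero]
    simp [hjm, hj]
  · intro h
    simp [MvPolynomial.notMem_support_iff.mp h]

lemma classify (d : Fin 3 →₀ ℕ) (hsum : d 0 + d 1 + d 2 = 3)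
    (hne : ¬(d 0 = 1 ∧ d 1 = 1 ∧ d 2 = 1)) :
    ∃ m i : Fin 3, d = Finsupp.single m 2 + Finsupp.single i 1 := by
  have hd : ∀ (m i : Fin 3), d 0 = Finsupp.single m 2 0 + Finsupp.single i 1 0 →
      d 1 = Finsupp.single m 2 1 + Finsupp.single i 1 1 →
      d 2 = Finsupp.single m 2 2 + Finsupp.single i 1 2 →
      d = Finsupp.single m 2 + Finsupp.single i 1 := by
    intro m i h0 h1 h2
    ext j
    rw [Finsupp.add_apply]
    fin_cases j
    · exact h0
    · exact h1
    · exact h2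
  by_cases c0 : 2 ≤ d 0
  · by_cases c00 : d 0 = 3
    · exact ⟨0, 0, hd 0 0 (by simp [Finsupp.single_apply]; omega) (by simp [Finsupp.single_apply]; omega) (by simp [Finsupp.single_apply]; omega)⟩
    · by_cases c01 : d 1 = 1
      · exact ⟨0, 1, hd 0 1 (by simp [Finsupp.single_apply]; omega) (by simp [Finsupp.single_apply]; omega) (by simp [Finsupp.single_apply]; omega)⟩
      · exact ⟨0, 2, hd 0 2 (by simp [Finsupp.single_apply]; omega) (by simp [Finsupp.single_apply]; omega) (by simp [Finsupp.single_apply]; omega)⟩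
  · by_cases c1 : 2 ≤ d 1
    · by_cases c10 : d 1 = 3
      · exact ⟨1, 1, hd 1 1 (by simp [Finsupp.single_apply]; omega) (by simp [Finsupp.single_apply]; omega) (by simp [Finsupp.single_apply]; omega)⟩
      · by_cases c11 : d 0 = 1
        · exact ⟨1, 0, hd 1 0 (by simp [Finsupp.single_apply]; omega) (by simp [Finsupp.single_apply]; omega) (by simp [Finsupp.single_apply]; omega)⟩
        · exact ⟨1, 2, hd 1 2 (by simp [Finsupp.single_apply]; omega) (by simp [Finsupp.single_apply]; omega) (by simp [Finsupp.single_apply]; omega)⟩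
    · by_cases c2 : 2 ≤ d 2
      · by_cases c20 : d 2 = 3
        · exact ⟨2, 2, hd 2 2 (by simp [Finsupp.single_apply]; omega) (by simp [Finsupp.single_apply]; omega) (by simp [Finsupp.single_apply]; omega)⟩
        · by_cases c21 : d 0 = 1
          · exact ⟨2, 0, hd 2 0 (by simp [Finsupp.single_apply]; omega) (by simp [Finsupp.single_apply]; omega) (by simp [Finsupp.single_apply]; omega)⟩
          · exact ⟨2, 1, hd 2 1 (by simp [Finsupp.single_apply]; omega) (by simp [Finsupp.single_apply]; omega) (by simp [Finsupp.single_apply]; omega)⟩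
      · exact absurd ⟨by omega, by omega, by omega⟩ hne

lemma weight_one_eq (d : Fin 3 →₀ ℕ) : (Finsupp.weight (1 : Fin 3 → ℕ)) d = ∑ j : Fin 3, d j := by
  rw [Finsupp.weight_apply, Finsupp.sum]
  rw [Finset.sum_subset (Finset.subset_univ d.support)]
  · simp
  · intro x _ hx
    simp [Finsupp.notMem_support_iff.mp hx]

lemma pderiv_isHomog {g : MvPolynomial (Fin 3) K} (hg : g.IsHomogeneous 3) (i : Fin 3) :
    (pderiv i g).IsHomogeneous 2 := by
  intro d hd
  rw [_root_.coeff_pderiv] at hd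
  have h2 : coeff (d + Finsupp.single i 1) g ≠ 0 := by
    intro h; rw [h, mul_zero] at hd; exact hd rfl
  have h3 := sum_eq_of_homog hg h2
  rw [weight_one_eq]
  simp only [Finsupp.add_apply, Finsupp.single_apply] at h3
  rw [Finset.sum_add_distrib, Finset.sum_ite_eq Finset.univ i (fun _ => 1)] at h3
  simp only [Finset.mem_univ, if_true] at h3
  omega

lemma key_vanish (g : MvPolynomial (Fin 3) K) (hg : g.IsHomogeneous 3)
    (hder : ∀ i m : Fin 3, eval (fun k => if k = m then (1:K) else 0) (pderiv i g) = 0)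
    (a : Fin 3 → K) (ha : ∀ m, a m ≠ 0) (haz : eval a g = 0) : g = 0 := by
  have step1 : ∀ m i : Fin 3, coeff (Finsupp.single m 2 + Finsupp.single i 1) g = 0 := by
    intro m i
    have h1 := hder i m
    rw [eval_single_homog (pderiv_isHomog hg i) m, _root_.coeff_pderiv] at h1
    rcases mul_eq_zero.mp h1 with h | h
    · exact (absurd (Nat.cast_eq_zero.mp h) (Nat.succ_ne_zero _) : False).elim
    · exact h
  set τ : Fin 3 →₀ ℕ := Finsupp.single 0 1 + Finsupp.single 1 1 + Finsupp.single 2 1 with hτ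
  have hother : ∀ d : Fin 3 →₀ ℕ, coeff d g ≠ 0 → d ≠ τ → False := by
    intro d hd hne
    have hsum : ∑ j : Fin 3, d j = 3 := sum_eq_of_homog hg hd
    have hsum' : d 0 + d 1 + d 2 = 3 := by
      rw [Fin.sum_univ_three] at hsum; exact hsum
    have hne' : ¬(d 0 = 1 ∧ d 1 = 1 ∧ d 2 = 1) := by
      rintro ⟨h0, h1, h2⟩
      apply hne
      ext j
      fin_cases j <;> simp [hτ, Finsupp.single_apply, h0, h1, h2]
    obtain ⟨m, i, rfl⟩ := classify d hsum' hne'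
    exact hd (step1 m i)
  have hτval : ∀ j, τ j = 1 := by
    intro j; fin_cases j <;> simp [hτ, Finsupp.single_apply]
  have step2 : coeff τ g = 0 := by
    by_cases hsupp : τ ∈ g.support
    · rw [eval_eq] at haz
      rw [Finset.sum_eq_single τ] at haz
      · have hprod : ∏ j ∈ τ.support, a j ^ τ j ≠ 0 := by
          apply Finset.prod_ne_zero_iff.mpr
          intro j _
          simp [hτval j, ha j]
        exact (mul_eq_zero.mp haz).resolve_right hprod
      · intro d hd hne
        exact absurd (hother d (MvPolynomial.mem_support_iff.mp hd) hne) not_false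
      · intro h; exact absurd hsupp h
    · exact MvPolynomial.notMem_support_iff.mp hsupp
  ext d
  rw [coeff_zero]
  by_cases hd : coeff d g = 0
  · exact hd
  · by_cases hdτ : d = τ
    · rw [hdτ]; exact step2
    · exact absurd (hother d hd hdτ) not_false

lemma forward_dir (z : Fin 3 → K) (q : Fin 3 → (Fin 3 → K))
    (hind : LinearIndependent K q)
    (hspan : ∀ i j : Fin 3, i ≠ j → z ∉ Submodule.span K {q i, q j})
    (f : MvPolynomial (Fin 3) K) (hf0 : f ≠ 0) (hfh : f.IsHomogeneous 3)
    (hfz : eval z f = 0)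
    (hfd : ∀ (i : Fin 3) (m : Fin 3), eval (q m) (pderiv i f) = 0) : False := by
  classical
  set M : Matrix (Fin 3) (Fin 3) K := Matrix.of (fun m j => q m j) with hM
  have hdet : M.det ≠ 0 := by
    intro h
    have hdetT : M.transpose.det = 0 := by rwa [Matrix.det_transpose]
    obtain ⟨g, hg0, hg⟩ := Matrix.exists_mulVec_eq_zero_iff.mpr hdetT
    have hcomb : ∑ m, g m • q m = 0 := by
      funext j
      have := congrFun hg j
      simpa [Matrix.mulVec, dotProduct, hM, Finset.sum_apply, mul_comm] using this
    obtain ⟨m, hm⟩ := Function.ne_iff.mp hg0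
    exact hm (Fintype.linearIndependent_iff.mp hind g hcomb m)
  set a : Fin 3 → K := Matrix.vecMul z M⁻¹ with haa
  have hza : Matrix.vecMul a M = z := by
    rw [haa, Matrix.vecMul_vecMul, Matrix.nonsing_inv_mul M (hdet.isUnit), Matrix.vecMul_one]
  have hz' : ∀ j, z j = a 0 * q 0 j + a 1 * q 1 j + a 2 * q 2 j := by
    intro j
    have := congrFun hza j
    rw [← this]
    simp [Matrix.vecMul, dotProduct, hM, Fin.sum_univ_three]
  have ha : ∀ m, a m ≠ 0 := by
    intro m hm
    fin_cases m
    · refine hspan 1 2 (by decide) (Submodule.mem_span_pair.mpr ⟨a 1, a 2, ?_⟩)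
      funext j
      simp only [Pi.add_apply, Pi.smul_apply, smul_eq_mul]
      have hm' : a 0 = 0 := hm
      rw [hz' j, hm']; ring
    · refine hspan 0 2 (by decide) (Submodule.mem_span_pair.mpr ⟨a 0, a 2, ?_⟩)
      funext j
      simp only [Pi.add_apply, Pi.smul_apply, smul_eq_mul]
      have hm' : a 1 = 0 := hm
      rw [hz' j, hm']; ring
    · refine hspan 0 1 (by decide) (Submodule.mem_span_pair.mpr ⟨a 0, a 1, ?_⟩)
      funext j
      simp only [Pi.add_apply, Pi.smul_apply, smul_eq_mul]
      have hm' : a 2 = 0 := hm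
      rw [hz' j, hm']; ring
  -- the substituted polynomial
  set s : Fin 3 → MvPolynomial (Fin 3) K := fun j => ∑ m, C (M m j) * X m with hs
  set g : MvPolynomial (Fin 3) K := bind₁ s f with hg
  have heval : ∀ (x : Fin 3 → K) (p : MvPolynomial (Fin 3) K),
      eval x (bind₁ s p) = eval (fun j => eval x (s j)) p := by
    intro x p
    exact eval₂Hom_bind₁ (RingHom.id K) x s p
  have heval_s : ∀ (x : Fin 3 → K) (j : Fin 3), eval x (s j) = ∑ m, M m j * x m := by
    intro x j; simp [hs]
  have hgh : g.IsHomogeneous 3 := by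
    have : ∀ j, (s j).IsHomogeneous 1 := by
      intro j
      apply MvPolynomial.IsHomogeneous.sum
      intro k _
      simpa using (isHomogeneous_X K k).C_mul (M k j)
    have h := hfh.aeval s this
    rwa [one_mul] at h
  have hder : ∀ i m : Fin 3, eval (fun k => if k = m then (1:K) else 0) (pderiv i g) = 0 := by
    intro i m
    rw [hg, pderiv_bind₁, map_sum]
    apply Finset.sum_eq_zero
    intro j _
    rw [map_mul, heval]
    have h1 : (fun j' => eval (fun k => if k = m then (1:K) else 0) (s j')) = q m := by
      funext j'
      rw [heval_s]
      rw [Finset.sum_congr rfl (fun m' _ => by rw [mul_ite, mul_one, mul_zero]),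
        Finset.sum_ite_eq' Finset.univ m (fun m' => M m' j')]
      simp [hM]
    rw [h1, hfd j m, zero_mul]
  have haz : eval a g = 0 := by
    rw [hg, heval]
    have : (fun j => eval a (s j)) = z := by
      funext j
      rw [heval_s, ← congrFun hza j]
      simp [Matrix.vecMul, dotProduct, mul_comm]
    rw [this, hfz]
  have hg0 : g = 0 := key_vanish g hgh hder a ha haz
  -- invert the substitution
  set B : Matrix (Fin 3) (Fin 3) K := M.transpose⁻¹ with hB
  have hMB : M.transpose * B = 1 := by
    rw [hB]
    exact Matrix.mul_nonsing_inv _ (by rw [Matrix.det_transpose]; exact hdet.isUnit)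
  set t : Fin 3 → MvPolynomial (Fin 3) K := fun m => ∑ k, C (B m k) * X k with ht
  have hts : ∀ j, bind₁ t (s j) = X j := by
    intro j
    rw [hs]
    simp only [map_sum, map_mul, algHom_C, MvPolynomial.algebraMap_eq, bind₁_X_right, ht]
    have : ∀ m : Fin 3, C (M m j) * ∑ k, C (B m k) * X k
        = ∑ k, C (M m j * B m k) * X k := by
      intro m
      rw [Finset.mul_sum]
      exact Finset.sum_congr rfl fun k _ => by rw [← mul_assoc, ← C_mul]
    rw [Finset.sum_congr rfl fun m _ => this m, Finset.sum_comm]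
    have h2 : ∀ k : Fin 3, ∑ m, C (M m j * B m k) * X k
        = C ((M.transpose * B) j k) * X k := by
      intro k
      rw [← Finset.sum_mul, ← map_sum, Matrix.mul_apply]
      congr 1
    rw [Finset.sum_congr rfl fun k _ => h2 k, hMB]
    rw [Finset.sum_eq_single j]
    · simp [Matrix.one_apply]
    · intro k _ hk
      simp [Matrix.one_apply, Ne.symm hk]
    · simp
  have hff : f = 0 := by
    have : bind₁ t (bind₁ s f) = f := by
      rw [bind₁_bind₁]
      rw [funext hts]
      rw [bind₁_X_left]
      rfl
    rw [← this, ← hg, hg0, map_zero]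
  exact hf0 hff

end Aux

/-- **Singular cubics through four points of the plane.**
Let `z, q 0, q 1, q 2` be four points of `ℙ²` (nonzero vectors of `K³`, pairwise
non-proportional where required, with `z` distinct from each `q i`).  There exists a nonzero
homogeneous cubic form vanishing at `z` and with all first-order partial derivatives vanishing
at `q 0`, `q 1` and `q 2` if and only if the three points `q 0, q 1, q 2` are collinear
(linearly dependent representative vectors) or `z` lies on one of the lines `⟨q i, q j⟩`. -/
theorem singular_cubic_through_point_iff
    {K : Type*} [Field K] [IsAlgClosed K] [CharZero K]
    (z : Fin 3 → K) (q : Fin 3 → (Fin 3 → K))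
    (hz : z ≠ 0) (hq : ∀ i, q i ≠ 0)
    (hqq : ∀ i j, i ≠ j → ∀ c : K, q i ≠ c • q j)
    (hzq : ∀ i, ∀ c : K, z ≠ c • q i) :
    (∃ f : MvPolynomial (Fin 3) K, f ≠ 0 ∧ f.IsHomogeneous 3 ∧
        eval z f = 0 ∧
        ∀ (i : Fin 3) (m : Fin 3), eval (q m) (pderiv i f) = 0) ↔
      (¬ LinearIndependent K q ∨
        ∃ i j : Fin 3, i ≠ j ∧ z ∈ Submodule.span K {q i, q j}) := by
  constructor
  · rintro ⟨f, hf0, hfh, hfz, hfd⟩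
    by_contra hcon
    push_neg at hcon
    obtain ⟨hind, hspan⟩ := hcon
    exact forward_dir z q hind hspan f hf0 hfh hfz hfd
  · rintro (h | ⟨i, j, hij, hmem⟩)
    · exact backward_case1 z q h
    · exact backward_case2 z q i j hij hmem
end

section
/- (Hyperplane induction for double points, with the independence hypotheses supplied by general position made explicit.) Let K be an algebraically closed field of characteristic 0, n ≥ 2, d ≥ 3, and let H ⊂ ℙ^n be the hyperplane {x_n = 0}. Let S be a finite set of r distinct points of ℙ^n, and write S ∩ H for the s points of S lying on H (each represented by a vector with last coordinate 0, hence giving a point of ℙ^{n−1} via the first n coordinates) and S ∖ H for the remaining r − s points. Assume: (i) the double points of S ∩ H, viewed in ℙ^{n−1}, impose independent conditions on degree-d forms in x_0,…,x_{n−1}, i.e., the subspace of degree-d forms in x_0,…,x_{n−1} with all first partials vanishing at each point of S ∩ H has codimension s·n; (ii) the simple points of S ∩ H, viewed in ℙ^{n−1}, impose independent conditions on degree-(d−1) forms in x_0,…,x_{n−1}, i.e., the subspace of degree-(d−1) forms vanishing at each point of S ∩ H has codimension s; and (iii) the double points of S ∖ H impose independent conditions on degree-(d−2) forms in x_0,…,x_n.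 Then the double points of S impose independent conditions on degree-d forms in x_0,…,x_n, i.e., the subspace of degree-d forms in x_0,…,x_n whose first partials all vanish at every point of S has codimension r(n+1). -/
open MvPolynomial

/-- Homogeneous forms of degree `d` in `N` variables all of whose first-order partial
derivatives vanish at every point of the family `p`. -/
noncomputable def dblVanish (K : Type) [Field K] (N d : ℕ) {ι : Type} (p : ι → (Fin N → K)) :
    Submodule K (MvPolynomial (Fin N) K) :=
  homogeneousSubmodule (Fin N) K d ⊓
    ⨅ (a : ι) (i : Fin N),
      LinearMap.ker ((aeval (p a)).toLinearMap ∘ₗ (pderiv i).toLinearMap)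

/-- Homogeneous forms of degree `d` in `N` variables vanishing at every point of `p`. -/
noncomputable def simpleVanish (K : Type) [Field K] (N d : ℕ) {ι : Type}
    (p : ι → (Fin N → K)) : Submodule K (MvPolynomial (Fin N) K) :=
  homogeneousSubmodule (Fin N) K d ⊓
    ⨅ a : ι, LinearMap.ker (aeval (p a)).toLinearMap

namespace VeroneseAux

open Module

variable {K : Type} [Field K] {n : ℕ}

/-! ### Dimension of the space of degree-`D` forms -/

noncomputable local instance homogFintype (N D : ℕ) :
    Fintype ↥{u : Fin N →₀ ℕ | u.degree = D} :=
  Fintype.ofEquiv (Sym (Fin N) D) <|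
    (Sym.equivNatSum (Fin N) D).trans <| Equiv.subtypeEquivRight fun u => by
      simp [Finsupp.degree_apply, Finsupp.sum, Set.mem_setOf_eq]

lemma finrank_homog (N D : ℕ) :
    finrank K ↥(homogeneousSubmodule (Fin N) K D) = (N + D - 1).choose D := by
  have h : homogeneousSubmodule (Fin N) K D
      = restrictSupport K {u : Fin N →₀ ℕ | u.degree = D} :=
    homogeneousSubmodule_eq_finsupp_supported (Fin N) K D
  rw [h, finrank_eq_card_basis (basisRestrictSupport K _)]
  rw [show Fintype.card ↥{u : Fin N →₀ ℕ | u.degree = D} = Fintype.card (Sym (Fin N) D) from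
    (Fintype.card_congr ((Sym.equivNatSum (Fin N) D).trans <| Equiv.subtypeEquivRight fun u => by
      simp [Finsupp.degree_apply, Finsupp.sum, Set.mem_setOf_eq]).symm)]
  rw [Sym.card_sym_eq_multichoose, Nat.multichoose_eq, Fintype.card_fin]

instance homogFD (N D : ℕ) : FiniteDimensional K ↥(homogeneousSubmodule (Fin N) K D) := by
  have h : homogeneousSubmodule (Fin N) K D
      = restrictSupport K {u : Fin N →₀ ℕ | u.degree = D} :=
    homogeneousSubmodule_eq_finsupp_supported (Fin N) K D
  rw [h]
  exact Module.Finite.of_basis (basisRestrictSupport K _)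

/-! ### Membership lemmas -/

lemma mem_dblVanish {N D : ℕ} {ι : Type} {p : ι → Fin N → K} {f : MvPolynomial (Fin N) K} :
    f ∈ dblVanish K N D p ↔ f.IsHomogeneous D ∧ ∀ q i, aeval (p q) (pderiv i f) = 0 := by
  simp [dblVanish, Submodule.mem_inf, Submodule.mem_iInf, LinearMap.mem_ker]

lemma mem_simpleVanish {N D : ℕ} {ι : Type} {p : ι → Fin N → K} {f : MvPolynomial (Fin N) K} :
    f ∈ simpleVanish K N D p ↔ f.IsHomogeneous D ∧ ∀ q, aeval (p q) f = 0 := by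
  simp [simpleVanish, Submodule.mem_inf, Submodule.mem_iInf, LinearMap.mem_ker]

instance dblFD (N D : ℕ) {ι : Type} (p : ι → Fin N → K) :
    FiniteDimensional K ↥(dblVanish K N D p) :=
  Submodule.finiteDimensional_of_le (S₂ := homogeneousSubmodule (Fin N) K D)
    fun _ hf => (mem_dblVanish.mp hf).1

instance simpleFD (N D : ℕ) {ι : Type} (p : ι → Fin N → K) :
    FiniteDimensional K ↥(simpleVanish K N D p) :=
  Submodule.finiteDimensional_of_le (S₂ := homogeneousSubmodule (Fin N) K D)
    fun _ hf => (mem_simpleVanish.mp hf).1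

/-! ### Lower bound: conditions never cut down more than their number -/

lemma lb (N D : ℕ) {ι : Type} [Fintype ι] (p : ι → Fin N → K) :
    (N + D - 1).choose D ≤ finrank K ↥(dblVanish K N D p) + Fintype.card ι * N := by
  classical
  set E : MvPolynomial (Fin N) K →ₗ[K] (ι × Fin N → K) :=
    LinearMap.pi (fun q => (aeval (p q.1)).toLinearMap ∘ₗ (pderiv q.2).toLinearMap) with hE
  set F := E.domRestrict (homogeneousSubmodule (Fin N) K D) with hF
  have hrn := LinearMap.finrank_range_add_finrank_ker F
  rw [finrank_homog] at hrn
  have h1 : finrank K ↥(LinearMap.range F) ≤ Fintype.card ι * N := by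
    have h := (LinearMap.range F).finrank_le
    rwa [Module.finrank_pi K, Fintype.card_prod, Fintype.card_fin] at h
  have h2 : finrank K ↥(LinearMap.ker F) ≤ finrank K ↥(dblVanish K N D p) := by
    refine LinearMap.finrank_le_finrank_of_injective
      (f := LinearMap.codRestrict _ ((homogeneousSubmodule (Fin N) K D).subtype ∘ₗ
        (LinearMap.ker F).subtype) ?_) ?_
    · rintro ⟨⟨f, hf⟩, hker⟩
      rw [LinearMap.mem_ker, hF] at hker
      refine mem_dblVanish.mpr ⟨hf, fun q i => ?_⟩
      simpa [hE, LinearMap.domRestrict_apply] using congrFun hker (q, i)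
    · intro x y hxy
      apply Subtype.ext
      apply Subtype.ext
      simpa [LinearMap.codRestrict_apply] using congrArg Subtype.val hxy
  omega

/-! ### The splitting upper bound -/

lemma finrank_le_split {V V' V'' : Type} [AddCommGroup V] [Module K V]
    [AddCommGroup V'] [Module K V'] [AddCommGroup V''] [Module K V'']
    (U : Submodule K V) [FiniteDimensional K ↥U] (L : V →ₗ[K] V')
    (P : Submodule K V') [FiniteDimensional K ↥P] (hP : ∀ f ∈ U, L f ∈ P)
    (ψ : V →ₗ[K] V'') (Q : Submodule K V'') [FiniteDimensional K ↥Q]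
    (hψ : ∀ f ∈ U, L f = 0 → ψ f ∈ Q)
    (hinj : ∀ f ∈ U, L f = 0 → ψ f = 0 → f = 0) :
    finrank K ↥U ≤ finrank K ↥P + finrank K ↥Q := by
  classical
  set F := L.domRestrict U with hF
  have hrn := LinearMap.finrank_range_add_finrank_ker F
  have h1 : finrank K ↥(LinearMap.range F) ≤ finrank K ↥P := by
    have hle : LinearMap.range F ≤ P := by
      rintro _ ⟨x, rfl⟩
      exact hP x.1 x.2
    exact LinearMap.finrank_le_finrank_of_injective (Submodule.inclusion_injective hle)
  have h2 : finrank K ↥(LinearMap.ker F) ≤ finrank K ↥Q := by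
    refine LinearMap.finrank_le_finrank_of_injective
      (f := LinearMap.codRestrict Q (ψ ∘ₗ U.subtype ∘ₗ (LinearMap.ker F).subtype) ?_) ?_
    · rintro ⟨⟨f, hf⟩, hker⟩
      exact hψ f hf (by simpa [hF, LinearMap.mem_ker] using hker)
    · rintro ⟨⟨f, hf⟩, hker⟩ ⟨⟨g, hg⟩, hker'⟩ hxy
      have hv : ψ f = ψ g := by
        simpa [LinearMap.codRestrict_apply] using congrArg Subtype.val hxy
      have hfg : f - g = 0 := by
        refine hinj (f - g) (U.sub_mem hf hg) ?_ ?_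
        · have hL1 : L f = 0 := by simpa [hF, LinearMap.mem_ker] using hker
          have hL2 : L g = 0 := by simpa [hF, LinearMap.mem_ker] using hker'
          rw [map_sub, hL1, hL2, sub_zero]
        · rw [map_sub, hv, sub_self]
      apply Subtype.ext
      apply Subtype.ext
      exact sub_eq_zero.mp hfg
  omega

/-! ### Restriction to the hyperplane -/

/-- Restriction to the hyperplane `xₙ = 0`. -/
noncomputable def phi (K : Type) [Field K] (n : ℕ) :
    MvPolynomial (Fin (n+1)) K →ₐ[K] MvPolynomial (Fin n) K :=
  aeval (Fin.snoc X 0)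

lemma phi_X_last : phi K n (X (Fin.last n)) = 0 := by
  simp [phi, Fin.snoc_last]

lemma phi_X_castSucc (j : Fin n) : phi K n (X (Fin.castSucc j)) = X j := by
  simp [phi, Fin.snoc_castSucc]

/-- Extend an exponent vector by zero in the last coordinate. -/
noncomputable def extF (v : Fin n →₀ ℕ) : Fin (n+1) →₀ ℕ :=
  Finsupp.embDomain Fin.castSuccEmb v

lemma extF_castSucc (v : Fin n →₀ ℕ) (j : Fin n) : extF v (Fin.castSucc j) = v j :=
  Finsupp.embDomain_apply_self _ _ _

lemma extF_last (v : Fin n →₀ ℕ) : extF v (Fin.last n) = 0 := by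
  apply Finsupp.embDomain_notin_range
  rintro ⟨j, hj⟩
  exact (Fin.castSucc_lt_last j).ne hj

lemma extF_inj : Function.Injective (extF (n := n)) :=
  Finsupp.embDomain_injective _

lemma extF_degree (v : Fin n →₀ ℕ) : (extF v).degree = v.degree := by
  unfold extF
  rw [Finsupp.degree_apply, Finsupp.degree_apply, Finsupp.support_embDomain, Finset.sum_map]
  exact Finset.sum_congr rfl fun j _ => Finsupp.embDomain_apply_self _ _ _

lemma exists_extF {u : Fin (n+1) →₀ ℕ} (h : u (Fin.last n) = 0) : ∃ v, u = extF v := by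
  refine ⟨Finsupp.comapDomain Fin.castSucc u ((Fin.castSucc_injective n).injOn), ?_⟩
  ext i
  refine Fin.lastCases ?_ (fun j => ?_) i
  · rw [h, extF_last]
  · rw [extF_castSucc, Finsupp.comapDomain_apply]

lemma extF_sub_single (w : Fin n →₀ ℕ) (i : Fin n) :
    extF w - Finsupp.single (Fin.castSucc i) 1 = extF (w - Finsupp.single i 1) := by
  ext j
  refine Fin.lastCases ?_ (fun k => ?_) j
  · rw [Finsupp.tsub_apply, extF_last, extF_last, Finsupp.single_apply,
      if_neg (Fin.castSucc_lt_last i).ne]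
    rfl
  · rw [Finsupp.tsub_apply, extF_castSucc, extF_castSucc, Finsupp.tsub_apply,
      Finsupp.single_apply, Finsupp.single_apply]
    simp [Fin.castSucc_inj]

lemma phi_monomial_extF (v : Fin n →₀ ℕ) (c : K) :
    phi K n (monomial (extF v) c) = monomial v c := by
  induction v using Finsupp.induction with
  | zero => simp [extF, monomial_zero', algHom_C]
  | single_add j e w hjw he ih =>
    have h : extF (Finsupp.single j e + w) = Finsupp.single (Fin.castSucc j) e + extF w := by
      unfold extF
      rw [Finsupp.embDomain_add, Finsupp.embDomain_single]
      rfl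
    rw [h, monomial_single_add, monomial_single_add, map_mul, map_pow, phi_X_castSucc, ih]

lemma phi_monomial_last {u : Fin (n+1) →₀ ℕ} (h : u (Fin.last n) ≠ 0) (c : K) :
    phi K n (monomial u c) = 0 := by
  rw [phi, aeval_monomial]
  rw [Finsupp.prod, Finset.prod_eq_zero (Finsupp.mem_support_iff.mpr h)]
  · ring
  · rw [Fin.snoc_last, zero_pow h]

lemma coeff_phi (f : MvPolynomial (Fin (n+1)) K) (v : Fin n →₀ ℕ) :
    coeff v (phi K n f) = coeff (extF v) f := by
  induction f using MvPolynomial.induction_on' with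
  | add p q hp hq => rw [map_add, coeff_add, coeff_add, hp, hq]
  | monomial u c =>
    by_cases h : u (Fin.last n) = 0
    · obtain ⟨w, rfl⟩ := exists_extF h
      rw [phi_monomial_extF, coeff_monomial, coeff_monomial]
      simp [extF_inj.eq_iff]
    · rw [phi_monomial_last h, coeff_zero, coeff_monomial, if_neg]
      intro hc
      exact h (hc ▸ extF_last v)

lemma phi_homogeneous {f : MvPolynomial (Fin (n+1)) K} {D : ℕ} (hf : f.IsHomogeneous D) :
    (phi K n f).IsHomogeneous D := by
  intro v hv
  rw [coeff_phi] at hv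
  have h := hf hv
  rwa [Pi.one_def, ← Finsupp.degree_eq_weight_one, extF_degree, Finsupp.degree_eq_weight_one] at h

lemma phi_pderiv (f : MvPolynomial (Fin (n+1)) K) (i : Fin n) :
    phi K n (pderiv (Fin.castSucc i) f) = pderiv i (phi K n f) := by
  induction f using MvPolynomial.induction_on' with
  | add p q hp hq => simp only [map_add, hp, hq]
  | monomial u c =>
    by_cases h : u (Fin.last n) = 0
    · obtain ⟨w, rfl⟩ := exists_extF h
      rw [pderiv_monomial, extF_sub_single, phi_monomial_extF, phi_monomial_extF,
        pderiv_monomial, extF_castSucc]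
    · rw [pderiv_monomial, phi_monomial_last (c := c * u (Fin.castSucc i)) ?_,
        phi_monomial_last h, map_zero]
      rw [Finsupp.tsub_apply, Finsupp.single_apply, if_neg (Fin.castSucc_lt_last i).ne]
      simpa using h

lemma phi_support {f : MvPolynomial (Fin (n+1)) K} (h : phi K n f = 0) :
    ∀ u ∈ f.support, u (Fin.last n) ≠ 0 := by
  intro u hu hlast
  obtain ⟨v, rfl⟩ := exists_extF hlast
  have hc := coeff_phi f v
  rw [h, coeff_zero] at hc
  exact Finsupp.mem_support_iff.mp hu hc.symm

lemma aeval_phi (y : Fin (n+1) → K) (hy : y (Fin.last n) = 0) (f : MvPolynomial (Fin (n+1)) K) :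
    aeval (y ∘ Fin.castSucc) (phi K n f) = aeval y f := by
  have h : ((aeval (y ∘ Fin.castSucc)).comp (phi K n) :
      MvPolynomial (Fin (n+1)) K →ₐ[K] K) = aeval y := by
    apply algHom_ext
    intro i
    rw [AlgHom.comp_apply]
    refine Fin.lastCases ?_ (fun j => ?_) i
    · rw [phi_X_last, map_zero, aeval_X, hy]
    · rw [phi_X_castSucc, aeval_X, aeval_X]
      rfl
  exact DFunLike.congr_fun h f

/-! ### Division by `xₙ` -/

noncomputable def delta (K : Type) [Field K] (n : ℕ) :
    MvPolynomial (Fin (n+1)) K →ₗ[K] MvPolynomial (Fin (n+1)) K :=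
  (AddMonoidAlgebra.coeffLinearEquiv K).symm.toLinearMap ∘ₗ
  Finsupp.lcomapDomain (fun v => v + Finsupp.single (Fin.last n) 1)
    (add_left_injective _) ∘ₗ (AddMonoidAlgebra.coeffLinearEquiv K).toLinearMap

lemma coeff_delta (f : MvPolynomial (Fin (n+1)) K) (v : Fin (n+1) →₀ ℕ) :
    coeff v (delta K n f) = coeff (v + Finsupp.single (Fin.last n) 1) f := rfl

lemma delta_mul_X {f : MvPolynomial (Fin (n+1)) K}
    (h : ∀ u ∈ f.support, u (Fin.last n) ≠ 0) :
    delta K n f * X (Fin.last n) = f := by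
  ext u
  rw [coeff_mul_X']
  by_cases hu : u (Fin.last n) = 0
  · rw [if_neg (by simp [Finsupp.mem_support_iff, hu])]
    by_contra hc
    exact h u (Finsupp.mem_support_iff.mpr fun h0 => hc h0.symm) hu
  · rw [if_pos (Finsupp.mem_support_iff.mpr hu), coeff_delta,
      tsub_add_cancel_of_le (Finsupp.single_le_iff.mpr (Nat.one_le_iff_ne_zero.mpr hu))]

lemma degree_add_single (v : Fin (n+1) →₀ ℕ) :
    (v + Finsupp.single (Fin.last n) 1).degree = v.degree + 1 := by
  simp only [Finsupp.degree_eq_weight_one, map_add]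
  congr 1
  rw [← Finsupp.degree_eq_weight_one]
  simp [Finsupp.degree_apply, Finsupp.support_single_ne_zero]

lemma delta_homogeneous {f : MvPolynomial (Fin (n+1)) K} {D E : ℕ} (hf : f.IsHomogeneous D)
    (hDE : E + 1 = D) : (delta K n f).IsHomogeneous E := by
  intro v hv
  rw [coeff_delta] at hv
  have h := hf hv
  rw [Pi.one_def, ← Finsupp.degree_eq_weight_one] at h ⊢
  rw [degree_add_single] at h
  omega

/-! ### Euler's relation -/

lemma euler_aux {N : ℕ} (u : Fin N →₀ ℕ) (c : K) (i : Fin N) :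
    X i * pderiv i (monomial u c) = (u i) • monomial u c := by
  rw [pderiv_monomial]
  by_cases h : u i = 0
  · simp [h]
  · rw [mul_comm, X, monomial_mul, mul_one,
      tsub_add_cancel_of_le (Finsupp.single_le_iff.mpr (Nat.one_le_iff_ne_zero.mpr h))]
    simp [smul_monomial, nsmul_eq_mul, mul_comm]

lemma euler {N D : ℕ} {f : MvPolynomial (Fin N) K} (hf : f.IsHomogeneous D) :
    ∑ i, X i * pderiv i f = D • f := by
  have hdeg : ∀ v ∈ f.support, (∑ i, v i) = D := by
    intro v hv
    have h2 := hf (mem_support_iff.mp hv)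
    rw [Pi.one_def, ← Finsupp.degree_eq_weight_one] at h2
    rw [← h2, Finsupp.degree_apply]
    exact (Finset.sum_subset (Finset.subset_univ _)
      (fun i _ hi => Finsupp.notMem_support_iff.mp hi)).symm
  calc ∑ i, X i * pderiv i f
      = ∑ i, ∑ v ∈ f.support, X i * pderiv i (monomial v (coeff v f)) := by
        conv_lhs => rw [f.as_sum]
        refine Finset.sum_congr rfl fun i _ => ?_
        rw [map_sum, Finset.mul_sum]
    _ = ∑ v ∈ f.support, ∑ i, X i * pderiv i (monomial v (coeff v f)) := Finset.sum_comm
    _ = ∑ v ∈ f.support, D • monomial v (coeff v f) := by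
        refine Finset.sum_congr rfl fun v hv => ?_
        simp_rw [euler_aux]
        rw [← Finset.sum_smul, hdeg v hv]
    _ = D • f := by rw [← Finset.smul_sum, ← f.as_sum]

lemma euler_eval {N D : ℕ} {f : MvPolynomial (Fin N) K} (hf : f.IsHomogeneous D) (y : Fin N → K) :
    (D : K) * aeval y f = ∑ i, y i * aeval y (pderiv i f) := by
  have h := congrArg (aeval y : MvPolynomial (Fin N) K →ₐ[K] K) (euler hf)
  rw [map_sum, map_nsmul] at h
  simp only [map_mul, aeval_X] at h
  rw [← nsmul_eq_mul]
  exact h.symm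

/-! ### Descent of vanishing conditions along division by `xₙ` -/

lemma double_point_descend [CharZero K] {Dg : ℕ} {g : MvPolynomial (Fin (n+1)) K}
    (hg : g.IsHomogeneous Dg) (y : Fin (n+1) → K) (hy : y (Fin.last n) ≠ 0)
    (h : ∀ j, aeval y (pderiv j (g * X (Fin.last n))) = 0) :
    aeval y g = 0 ∧ ∀ j, aeval y (pderiv j g) = 0 := by
  have hps : ∀ j, aeval y (pderiv j g) * y (Fin.last n)
      + aeval y g * aeval y (pderiv j (X (Fin.last n) : MvPolynomial (Fin (n+1)) K)) = 0 := by
    intro j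
    have hj := h j
    rwa [pderiv_mul, map_add, map_mul, map_mul, aeval_X] at hj
  have hcs : ∀ k : Fin n, aeval y (pderiv (Fin.castSucc k) g) = 0 := by
    intro k
    have hk := hps (Fin.castSucc k)
    rw [pderiv_X_of_ne (Fin.castSucc_lt_last k).ne', map_zero, mul_zero, add_zero] at hk
    exact (mul_eq_zero.mp hk).resolve_right hy
  have hlast : aeval y (pderiv (Fin.last n) g) * y (Fin.last n) + aeval y g = 0 := by
    have hl := hps (Fin.last n)
    rwa [pderiv_X_self, map_one, mul_one] at hl
  have heuler := euler_eval hg y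
  rw [Fin.sum_univ_castSucc] at heuler
  simp only [hcs, mul_zero, Finset.sum_const_zero, zero_add] at heuler
  have hg0 : aeval y g = 0 := by
    have hsum : ((Dg : K) + 1) * aeval y g = 0 := by
      rw [add_mul, one_mul, heuler]
      linear_combination hlast
    exact (mul_eq_zero.mp hsum).resolve_left (Nat.cast_add_one_ne_zero Dg)
  refine ⟨hg0, fun j => ?_⟩
  refine Fin.lastCases ?_ hcs j
  have hml : aeval y (pderiv (Fin.last n) g) * y (Fin.last n) = 0 := by
    rw [← hlast, hg0, add_zero]
  exact (mul_eq_zero.mp hml).resolve_right hy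

lemma simple_point_descend {g : MvPolynomial (Fin (n+1)) K}
    (y : Fin (n+1) → K) (hy : y (Fin.last n) = 0)
    (h : aeval y (pderiv (Fin.last n) (g * X (Fin.last n))) = 0) :
    aeval y g = 0 := by
  rw [pderiv_mul, map_add, map_mul, map_mul, aeval_X, pderiv_X_self, map_one, mul_one, hy,
    mul_zero, zero_add] at h
  exact h

end VeroneseAux

open VeroneseAux Module

/-- **Hyperplane induction for double points.**  Let `H = {xₙ = 0} ⊂ ℙⁿ` and let `S` be a set of
`r = s + m` distinct points, with `a : Fin s` the points on `H` and `b : Fin m` those off `H`.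
If (i) the double points of `S ∩ H`, viewed in `ℙⁿ⁻¹`, impose independent conditions on
degree-`d` forms, (ii) the simple points of `S ∩ H`, viewed in `ℙⁿ⁻¹`, impose independent
conditions on degree-`(d-1)` forms, and (iii) the double points of `S ∖ H` impose independent
conditions on degree-`(d-2)` forms in `ℙⁿ`, then the double points of `S` impose independent
conditions on degree-`d` forms in `ℙⁿ`. -/
theorem veronese_hyperplane_induction
    {K : Type} [Field K] [IsAlgClosed K] [CharZero K]
    (n d s m : ℕ) (hn : 2 ≤ n) (hd : 3 ≤ d)
    (a : Fin s → (Fin (n + 1) → K)) (b : Fin m → (Fin (n + 1) → K))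
    (ha0 : ∀ i, a i ≠ 0) (hb0 : ∀ i, b i ≠ 0)
    (haH : ∀ i, a i (Fin.last n) = 0)
    (hbH : ∀ i, b i (Fin.last n) ≠ 0)
    (haa : ∀ i j, i ≠ j → ∀ c : K, a i ≠ c • a j)
    (hbb : ∀ i j, i ≠ j → ∀ c : K, b i ≠ c • b j)
    (hi : Module.finrank K ↥(dblVanish K n d (fun i => a i ∘ Fin.castSucc)) + s * n
        = Nat.choose (n - 1 + d) d)
    (hii : Module.finrank K ↥(simpleVanish K n (d - 1) (fun i => a i ∘ Fin.castSucc)) + s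
        = Nat.choose (n - 1 + (d - 1)) (d - 1))
    (hiii : Module.finrank K ↥(dblVanish K (n + 1) (d - 2) b) + m * (n + 1)
        = Nat.choose (n + (d - 2)) (d - 2)) :
    Module.finrank K ↥(dblVanish K (n + 1) d (Fin.append a b)) + (s + m) * (n + 1)
      = Nat.choose (n + d) d := by
  classical
  -- the intermediate space `B`
  set B : Submodule K (MvPolynomial (Fin (n+1)) K) :=
    simpleVanish K (n+1) (d-1) a ⊓ dblVanish K (n+1) (d-1) b with hB
  have memB : ∀ f : MvPolynomial (Fin (n+1)) K, f ∈ B ↔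
      f.IsHomogeneous (d-1) ∧ (∀ i, aeval (a i) f = 0) ∧
        ∀ q j, aeval (b q) (pderiv j f) = 0 := by
    intro f
    rw [hB, Submodule.mem_inf, mem_simpleVanish, mem_dblVanish]
    tauto
  -- conditions satisfied by members of T
  have hTa : ∀ f ∈ dblVanish K (n+1) d (Fin.append a b), ∀ i j, aeval (a i) (pderiv j f) = 0 := by
    intro f hf i j
    have h := (mem_dblVanish.mp hf).2 (Fin.castAdd m i) j
    rwa [Fin.append_left] at h
  have hTb : ∀ f ∈ dblVanish K (n+1) d (Fin.append a b), ∀ q j, aeval (b q) (pderiv j f) = 0 := by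
    intro f hf q j
    have h := (mem_dblVanish.mp hf).2 (Fin.natAdd s q) j
    rwa [Fin.append_right] at h
  -- Step 1: finrank T ≤ finrank A + finrank B
  have e1 : finrank K ↥(dblVanish K (n+1) d (Fin.append a b)) ≤
      finrank K ↥(dblVanish K n d (fun i => a i ∘ Fin.castSucc)) + finrank K ↥B := by
    refine finrank_le_split _ (phi K n).toLinearMap _ ?_ (delta K n) _ ?_ ?_
    · intro f hf
      refine mem_dblVanish.mpr ⟨phi_homogeneous (mem_dblVanish.mp hf).1, fun i j => ?_⟩
      show aeval (a i ∘ Fin.castSucc) (pderiv j (phi K n f)) = 0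
      rw [← phi_pderiv, aeval_phi _ (haH i)]
      exact hTa f hf i (Fin.castSucc j)
    · intro f hf h0
      have hXf : delta K n f * X (Fin.last n) = f := delta_mul_X (phi_support h0)
      refine (memB _).mpr ⟨delta_homogeneous (E := d - 1) (mem_dblVanish.mp hf).1 (by omega),
        fun i => ?_, fun q j => ?_⟩
      · exact simple_point_descend (a i) (haH i) (by rw [hXf]; exact hTa f hf i (Fin.last n))
      · exact (double_point_descend (delta_homogeneous (E := d - 1) (mem_dblVanish.mp hf).1 (by omega))
          (b q) (hbH q) (fun j' => by rw [hXf]; exact hTb f hf q j')).2 j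
    · intro f hf h0 hd0
      rw [← delta_mul_X (phi_support h0), hd0, zero_mul]
  -- Step 2: finrank B ≤ finrank A' + finrank C
  have e2 : finrank K ↥B ≤
      finrank K ↥(simpleVanish K n (d-1) (fun i => a i ∘ Fin.castSucc)) +
      finrank K ↥(dblVanish K (n+1) (d-2) b) := by
    refine finrank_le_split _ (phi K n).toLinearMap _ ?_ (delta K n) _ ?_ ?_
    · intro f hf
      refine mem_simpleVanish.mpr ⟨phi_homogeneous ((memB f).mp hf).1, fun i => ?_⟩
      show aeval (a i ∘ Fin.castSucc) (phi K n f) = 0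
      rw [aeval_phi _ (haH i)]
      exact ((memB f).mp hf).2.1 i
    · intro f hf h0
      have hXf : delta K n f * X (Fin.last n) = f := delta_mul_X (phi_support h0)
      refine mem_dblVanish.mpr ⟨delta_homogeneous (E := d - 2) ((memB f).mp hf).1 (by omega),
        fun q j => ?_⟩
      exact (double_point_descend (delta_homogeneous (E := d - 2) ((memB f).mp hf).1 (by omega))
        (b q) (hbH q) (fun j' => by rw [hXf]; exact ((memB f).mp hf).2.2 q j')).2 j
    · intro f hf h0 hd0
      rw [← delta_mul_X (phi_support h0), hd0, zero_mul]
  -- Step 3: lower bound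
  have e3 : (n + d).choose d ≤
      finrank K ↥(dblVanish K (n+1) d (Fin.append a b)) + (s + m) * (n + 1) := by
    have h := lb (n+1) d (Fin.append a b)
    rwa [show n + 1 + d - 1 = n + d by omega, Fintype.card_fin] at h
  -- Pascal identities
  have pascal1 : (n + d).choose d = (n - 1 + d).choose (d-1) + (n - 1 + d).choose d := by
    have h2 : d - 1 + 1 = d := by omega
    have h3 := Nat.choose_succ_succ (n - 1 + d) (d - 1)
    simp only [Nat.succ_eq_add_one] at h3
    rw [h2, show n - 1 + d + 1 = n + d by omega] at h3
    exact h3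
  have pascal2 : (n - 1 + d).choose (d-1)
      = (n + (d-2)).choose (d-2) + (n + (d-2)).choose (d-1) := by
    have h2 : d - 2 + 1 = d - 1 := by omega
    have h3 := Nat.choose_succ_succ (n + (d-2)) (d - 2)
    simp only [Nat.succ_eq_add_one] at h3
    rw [h2, show n + (d-2) + 1 = n - 1 + d by omega] at h3
    exact h3
  have hii' : (n - 1 + (d-1)).choose (d-1) = (n + (d-2)).choose (d-1) := by
    rw [show n - 1 + (d-1) = n + (d-2) by omega]
  have hP : (s + m) * (n + 1) = s * n + s + m * (n + 1) := by ring
  omega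
end

section
/- Let K be an algebraically closed field of characteristic 0, let n ≥ 2 and d ≥ 3, and set r = ⌈(d+2)/2⌉. If S is a set of r distinct points of ℙ^n that are not collinear (their representative vectors span a subspace of K^{n+1} of dimension ≥ 3), then the double points 2S impose independent conditions on degree-d forms: the subspace of degree-d forms in x_0,…,x_n whose first-order partial derivatives all vanish at every point of S has dimension exactly binom(n+d, n) − r(n+1). (Equivalently, ν_d(S) ∉ Ter_r(V_n^d).) -/
open MvPolynomial


variable {K : Type} [Field K] {N : ℕ}

/-- The linear form with coefficient vector `w`. -/
noncomputable def linF (w : Fin N → K) : MvPolynomial (Fin N) K :=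
  ∑ i, C (w i) * X i

lemma linF_isHomogeneous (w : Fin N → K) : (linF w).IsHomogeneous 1 :=
  MvPolynomial.IsHomogeneous.sum _ _ _ fun i _ => isHomogeneous_C_mul_X (w i) i

lemma aeval_linF (p : Fin N → K) (w : Fin N → K) :
    aeval p (linF w) = ∑ i, w i * p i := by
  simp [linF]

lemma pderiv_linF (j : Fin N) (w : Fin N → K) :
    pderiv j (linF w) = C (w j) := by
  rw [linF, map_sum]
  rw [Finset.sum_eq_single j]
  · simp [pderiv_C_mul]
  · intro i _ hij
    simp [pderiv_C_mul, pderiv_X_of_ne hij]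
  · simp


variable {K : Type} [Field K] {N : ℕ}

lemma euler_monomial (p : Fin N → K) (s : Fin N →₀ ℕ) (a : K) :
    ∑ i, p i * aeval p (pderiv i (monomial s a)) = (s.degree : K) * aeval p (monomial s a) := by
  have key : ∀ i : Fin N, p i * aeval p (pderiv i (monomial s a))
      = (s i : K) * aeval p (monomial s a) := by
    intro i
    rw [pderiv_monomial]
    rcases Nat.eq_zero_or_pos (s i) with h | h
    · simp [h]
    · have hs : (s - Finsupp.single i 1) + Finsupp.single i 1 = s :=
        tsub_add_cancel_of_le (by rwa [Finsupp.single_le_iff])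
      conv_rhs => rw [← hs]
      rw [monomial_add_single, pow_one]
      simp only [aeval_monomial, map_mul, aeval_X, Algebra.algebraMap_self, RingHom.id_apply,
        Finsupp.add_apply, Finsupp.single_eq_same, Finsupp.tsub_apply]
      rw [Nat.sub_add_cancel h]
      ring
  rw [Finset.sum_congr rfl fun i _ => key i, ← Finset.sum_mul]
  congr 1
  rw [show s.degree = ∑ i ∈ s.support, s i from rfl]
  rw [Finset.sum_subset (Finset.subset_univ s.support)]
  · exact (Nat.cast_sum _ _).symm
  · intro x _ hx
    simp [Finsupp.notMem_support_iff.mp hx]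

theorem euler_aeval {d : ℕ} {f : MvPolynomial (Fin N) K} (hf : f.IsHomogeneous d)
    (p : Fin N → K) :
    ∑ i, p i * aeval p (pderiv i f) = (d : K) * aeval p f := by
  have hpd : ∀ i : Fin N, pderiv i f = ∑ s ∈ f.support, pderiv i (monomial s (coeff s f)) := by
    intro i; rw [← map_sum, ← as_sum]
  calc ∑ i, p i * aeval p (pderiv i f)
      = ∑ i, ∑ s ∈ f.support, p i * aeval p (pderiv i (monomial s (coeff s f))) := by
        simp_rw [hpd, map_sum, Finset.mul_sum]
    _ = ∑ s ∈ f.support, ∑ i, p i * aeval p (pderiv i (monomial s (coeff s f))) :=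
        Finset.sum_comm
    _ = ∑ s ∈ f.support, (d : K) * aeval p (monomial s (coeff s f)) := by
        refine Finset.sum_congr rfl fun s hs => ?_
        rw [euler_monomial]
        congr 2
        rw [Finsupp.degree_eq_weight_one]
        exact hf (mem_support_iff.mp hs)
    _ = (d : K) * aeval p f := by rw [← Finset.mul_sum, ← map_sum, ← as_sum]


variable {K : Type} [Field K] {N : ℕ}

lemma aeval_pderiv_mul_sq (p : Fin N → K) (g h : MvPolynomial (Fin N) K)
    (hp : aeval p h = 0) (i : Fin N) :
    aeval p (pderiv i (g * h ^ 2)) = 0 := by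
  simp [pderiv_mul, pderiv_pow, show eval p h = 0 from hp]

lemma sum_single_mul_eq (ψ : (Fin N → K) →ₗ[K] K) (v : Fin N → K) :
    ∑ i, ψ (Pi.single i 1) * v i = ψ v := by
  rw [LinearMap.pi_apply_eq_sum_univ ψ v]
  refine Finset.sum_congr rfl fun i _ => ?_
  have : (fun j => if i = j then (1 : K) else 0) = Pi.single i 1 := by
    ext j; simp [Pi.single_apply, eq_comm]
  rw [this, smul_eq_mul, mul_comm]

lemma exists_dual_w {x : Fin N → K} (U : Submodule K (Fin N → K)) (hx : x ∉ U) :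
    ∃ w : Fin N → K, (∀ u ∈ U, ∑ i, w i * u i = 0) ∧ ∑ i, w i * x i = 1 := by
  obtain ⟨φ, hφx, hφU⟩ := U.exists_dual_map_eq_bot_of_notMem hx inferInstance
  refine ⟨fun i => ((φ x)⁻¹ • φ) (Pi.single i 1), fun u hu => ?_, ?_⟩
  · rw [sum_single_mul_eq]
    have : φ u = 0 := by
      have : φ u ∈ U.map φ := Submodule.mem_map_of_mem hu
      rwa [hφU, Submodule.mem_bot] at this
    simp [this]
  · rw [sum_single_mul_eq]
    simp [inv_mul_cancel₀ hφx]

lemma finrank_homogeneousSubmodule (N d : ℕ) :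
    Module.finrank K (homogeneousSubmodule (Fin N) K d) = Nat.choose (N + d - 1) d := by
  have hdeg : ∀ s : Fin N →₀ ℕ, (Finsupp.toMultiset s).card = s.degree := by
    intro s
    rw [Finsupp.card_toMultiset]
    rfl
  let e : ↥{s : Fin N →₀ ℕ | s.degree = d} ≃ Sym (Fin N) d :=
    { toFun := fun s => ⟨Finsupp.toMultiset s.1, by rw [hdeg]; exact s.2⟩
      invFun := fun m => ⟨Multiset.toFinsupp m.1, show (Multiset.toFinsupp m.1).degree = d by
        rw [← hdeg, Multiset.toFinsupp_toMultiset]; exact m.2⟩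
      left_inv := fun s => Subtype.ext (Finsupp.toMultiset_toFinsupp s.1)
      right_inv := fun m => Subtype.ext (Multiset.toFinsupp_toMultiset m.1) }
  haveI : Fintype ↥{s : Fin N →₀ ℕ | s.degree = d} := Fintype.ofEquiv _ e.symm
  have hb : homogeneousSubmodule (Fin N) K d
      = MvPolynomial.restrictSupport K {s : Fin N →₀ ℕ | s.degree = d} :=
    homogeneousSubmodule_eq_finsupp_supported (Fin N) K d
  rw [hb]
  rw [Module.finrank_eq_card_basis
    (MvPolynomial.basisRestrictSupport K {s : Fin N →₀ ℕ | s.degree = d})]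
  rw [Fintype.card_congr e, Sym.card_sym_eq_choose, Fintype.card_fin]


lemma exists_singular_form {K : Type} [Field K] [CharZero K] {N d r : ℕ}
    (hd : 3 ≤ d) (hr3 : 3 ≤ r) (hrd : 2 * r ≤ d + 3)
    (S : Fin r → (Fin N → K)) (hS0 : ∀ i, S i ≠ 0)
    (hSd : ∀ i j, i ≠ j → ∀ c : K, S i ≠ c • S j)
    (hspan : ∀ a b : Fin r, ∃ c, S c ∉ Submodule.span K {S a, S b})
    (a : Fin r) (v : Fin N → K) :
    ∃ f : MvPolynomial (Fin N) K, f.IsHomogeneous d ∧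
      (∀ b, b ≠ a → ∀ i, aeval (S b) (pderiv i f) = 0) ∧
      (∀ i, aeval (S a) (pderiv i f) = v i) := by
  classical
  -- pick b ≠ a
  obtain ⟨b, hba⟩ : ∃ b : Fin r, b ≠ a := by
    rcases Decidable.eq_or_ne a ⟨0, by omega⟩ with h | h
    · exact ⟨⟨1, by omega⟩, by rw [h]; intro hh; exact absurd (congrArg Fin.val hh) (by simp)⟩
    · exact ⟨⟨0, by omega⟩, fun hh => h hh.symm⟩
  obtain ⟨c, hc⟩ := hspan a b
  have hca : c ≠ a := fun h => hc (h ▸ Submodule.subset_span (by simp))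
  have hcb : c ≠ b := fun h => hc (h ▸ Submodule.subset_span (by simp))
  have hA : S a ∉ Submodule.span K {S b, S c} := by
    intro hmem
    obtain ⟨x, y, hxy⟩ := Submodule.mem_span_pair.mp hmem
    by_cases hy : y = 0
    · refine hSd a b hba.symm x ?_
      rw [← hxy, hy, zero_smul, add_zero]
    · apply hc
      have h2 : S c = y⁻¹ • (S a - x • S b) := by
        rw [← hxy]; rw [add_sub_cancel_left, smul_smul, inv_mul_cancel₀ hy, one_smul]
      rw [h2]
      refine Submodule.smul_mem _ _ (Submodule.sub_mem _ ?_ (Submodule.smul_mem _ _ ?_)) <;>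
        exact Submodule.subset_span (by simp)
  have hAb : ∀ b' : Fin r, b' ≠ a → S a ∉ Submodule.span K {S b'} := by
    intro b' hb' h
    obtain ⟨x, hx⟩ := Submodule.mem_span_singleton.mp h
    exact hSd a b' (Ne.symm hb') x hx.symm
  obtain ⟨w0, h0U, h0a⟩ := exists_dual_w (Submodule.span K {S b, S c}) hA
  have hW : ∀ b' : Fin r, ∃ w : Fin N → K,
      b' ≠ a → (∑ i, w i * S b' i = 0) ∧ ∑ i, w i * S a i = 1 := by
    intro b'
    by_cases hb' : b' = a
    · exact ⟨0, fun h => absurd hb' h⟩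
    · obtain ⟨w, hw1, hw2⟩ := exists_dual_w (Submodule.span K {S b'}) (hAb b' hb')
      exact ⟨w, fun _ => ⟨hw1 (S b') (Submodule.mem_span_singleton_self _), hw2⟩⟩
  choose W hWs using hW
  obtain ⟨u, -, hu⟩ := exists_dual_w (⊥ : Submodule K (Fin N → K)) (by simpa using hS0 a)
  set D : Finset (Fin r) := Finset.univ \ {a, b, c} with hD
  have hcard3 : ({a, b, c} : Finset (Fin r)).card = 3 :=
    Finset.card_eq_three.mpr ⟨a, b, c, Ne.symm hba, Ne.symm hca, Ne.symm hcb, rfl⟩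
  have hcardD : D.card = r - 3 := by
    rw [hD, Finset.card_sdiff_of_subset (Finset.subset_univ _), hcard3, Finset.card_univ, Fintype.card_fin]
  have hDa : ∀ b' ∈ D, b' ≠ a := by
    intro b' hb'
    rw [hD, Finset.mem_sdiff] at hb'
    intro h; exact hb'.2 (by simp [h])
  set h : MvPolynomial (Fin N) K := linF w0 * ∏ b' ∈ D, linF (W b') with hh
  have hhom_h : h.IsHomogeneous (r - 2) := by
    have h1 : (∏ b' ∈ D, linF (W b')).IsHomogeneous (∑ _b' ∈ D, 1) :=
      MvPolynomial.IsHomogeneous.prod D _ _ fun b' _ => linF_isHomogeneous (W b')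
    have := (linF_isHomogeneous w0).mul h1
    have heq : 1 + ∑ _b' ∈ D, (1 : ℕ) = r - 2 := by
      rw [Finset.sum_const, smul_eq_mul, mul_one, hcardD]; omega
    rwa [heq] at this
  have h_at_a : aeval (S a) h = 1 := by
    rw [hh, map_mul, aeval_linF, h0a, one_mul, map_prod]
    refine Finset.prod_eq_one fun b' hb' => ?_
    rw [aeval_linF]
    exact (hWs b' (hDa b' hb')).2
  have h_at_b : ∀ b'', b'' ≠ a → aeval (S b'') h = 0 := by
    intro b'' hb''
    rw [hh, map_mul, map_prod]
    by_cases hmem : b'' ∈ D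
    · refine mul_eq_zero.mpr (Or.inr (Finset.prod_eq_zero hmem ?_))
      rw [aeval_linF]
      exact (hWs b'' hb'').1
    · have hbc : b'' = b ∨ b'' = c := by
        rw [hD, Finset.mem_sdiff] at hmem
        push_neg at hmem
        have := hmem (Finset.mem_univ _)
        simp only [Finset.mem_insert, Finset.mem_singleton] at this
        tauto
      refine mul_eq_zero.mpr (Or.inl ?_)
      rw [aeval_linF]
      refine h0U (S b'') ?_
      rcases hbc with h | h <;> rw [h] <;> exact Submodule.subset_span (by simp)
  set m : ℕ := d - 2 * (r - 2) with hm
  have hm1 : 1 ≤ m := by omega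
  have hmd : m + 2 * (r - 2) = d := by omega
  -- the top form
  set ftop : MvPolynomial (Fin N) K := linF u ^ m * h ^ 2 with hftop
  have hhom_top : ftop.IsHomogeneous d := by
    have := ((linF_isHomogeneous u).pow m).mul (hhom_h.pow 2)
    have heq : 1 * m + (r - 2) * 2 = d := by omega
    rwa [heq] at this
  have htop_val : aeval (S a) ftop = 1 := by
    rw [hftop, map_mul, map_pow, map_pow, aeval_linF, hu, h_at_a, one_pow, one_pow, one_mul]
  have htop_grad0 : ∀ b'', b'' ≠ a → ∀ i, aeval (S b'') (pderiv i ftop) = 0 := by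
    intro b'' hb'' i
    exact aeval_pderiv_mul_sq _ _ _ (h_at_b b'' hb'') i
  set g0 : Fin N → K := fun i => aeval (S a) (pderiv i ftop) with hg0
  have heuler : ∑ i, S a i * g0 i = (d : K) := by
    have := euler_aeval hhom_top (S a)
    rwa [htop_val, mul_one] at this
  -- forms with prescribed orthogonal gradient
  set G : MvPolynomial (Fin N) K := linF u ^ (m - 1) * h ^ 2 with hG
  have hG_val : aeval (S a) G = 1 := by
    rw [hG, map_mul, map_pow, map_pow, aeval_linF, hu, h_at_a, one_pow, one_pow, one_mul]
  have key : ∀ w : Fin N → K, (∑ i, w i * S a i = 0) →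
      ∃ f : MvPolynomial (Fin N) K, f.IsHomogeneous d ∧
        (∀ b'', b'' ≠ a → ∀ i, aeval (S b'') (pderiv i f) = 0) ∧
        (∀ i, aeval (S a) (pderiv i f) = w i) := by
    intro w hw
    refine ⟨linF w * G, ?_, ?_, ?_⟩
    · have := (linF_isHomogeneous w).mul (((linF_isHomogeneous u).pow (m - 1)).mul (hhom_h.pow 2))
      have heq : 1 + (1 * (m - 1) + (r - 2) * 2) = d := by omega
      rwa [heq] at this
    · intro b'' hb'' i
      have : linF w * G = (linF w * linF u ^ (m - 1)) * h ^ 2 := by rw [hG]; ring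
      rw [this]
      exact aeval_pderiv_mul_sq _ _ _ (h_at_b b'' hb'') i
    · intro i
      rw [pderiv_mul, pderiv_linF]
      simp only [map_add, map_mul, map_pow, aeval_C, Algebra.algebraMap_self, RingHom.id_apply,
        aeval_linF, hu, h_at_a, hw, one_pow, mul_one, one_mul, zero_mul, add_zero]
      rw [hG_val, mul_one]
  -- assemble
  have hdK : (d : K) ≠ 0 := Nat.cast_ne_zero.mpr (by omega)
  set c0 : K := (∑ i, v i * S a i) / d with hc0
  set w : Fin N → K := v - c0 • g0 with hwdef
  have hw : ∑ i, w i * S a i = 0 := by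
    have : ∑ i, w i * S a i = (∑ i, v i * S a i) - c0 * ∑ i, S a i * g0 i := by
      rw [Finset.mul_sum, ← Finset.sum_sub_distrib]
      refine Finset.sum_congr rfl fun i _ => ?_
      simp [hwdef]; ring
    rw [this, heuler, hc0]
    field_simp
    ring
  obtain ⟨f1, hf1hom, hf1grad0, hf1grada⟩ := key w hw
  refine ⟨f1 + c0 • ftop, ?_, ?_, ?_⟩
  · refine hf1hom.add ?_
    rw [smul_eq_C_mul]
    exact hhom_top.C_mul c0
  · intro b'' hb'' i
    rw [smul_eq_C_mul, map_add, pderiv_C_mul, map_add, map_mul, aeval_C,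
      hf1grad0 b'' hb'' i, htop_grad0 b'' hb'' i, mul_zero, add_zero]
  · intro i
    rw [smul_eq_C_mul, map_add, pderiv_C_mul, map_add, map_mul, aeval_C, hf1grada i]
    simp only [hwdef, Pi.sub_apply, Pi.smul_apply, smul_eq_mul, hg0,
      Algebra.algebraMap_self, RingHom.id_apply]
    ring

lemma finiteDimensional_homogeneousSubmodule (N d : ℕ) :
    FiniteDimensional K (homogeneousSubmodule (Fin N) K d) := by
  have hdeg : ∀ s : Fin N →₀ ℕ, (Finsupp.toMultiset s).card = s.degree := by
    intro s; rw [Finsupp.card_toMultiset]; rfl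
  let e : ↥{s : Fin N →₀ ℕ | s.degree = d} ≃ Sym (Fin N) d :=
    { toFun := fun s => ⟨Finsupp.toMultiset s.1, by rw [hdeg]; exact s.2⟩
      invFun := fun m => ⟨Multiset.toFinsupp m.1, show (Multiset.toFinsupp m.1).degree = d by
        rw [← hdeg, Multiset.toFinsupp_toMultiset]; exact m.2⟩
      left_inv := fun s => Subtype.ext (Finsupp.toMultiset_toFinsupp s.1)
      right_inv := fun m => Subtype.ext (Multiset.toFinsupp_toMultiset m.1) }
  haveI : Fintype ↥{s : Fin N →₀ ℕ | s.degree = d} := Fintype.ofEquiv _ e.symm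
  have hb : homogeneousSubmodule (Fin N) K d
      = MvPolynomial.restrictSupport K {s : Fin N →₀ ℕ | s.degree = d} :=
    homogeneousSubmodule_eq_finsupp_supported (Fin N) K d
  have : FiniteDimensional K
      (MvPolynomial.restrictSupport K {s : Fin N →₀ ℕ | s.degree = d}) :=
    Module.Finite.of_basis (MvPolynomial.basisRestrictSupport K _)
  exact hb ▸ this

/-- **Non-collinear points are not in the first Terracini locus of the Veronese variety.**
Let `n ≥ 2`, `d ≥ 3` and `r = ⌈(d+2)/2⌉ = (d+3)/2` (integer division).  If `S` is a set of `r`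
distinct non-collinear points of `ℙⁿ` (their representatives span a subspace of dimension `≥ 3`),
then the double points `2S` impose independent conditions on degree-`d` forms: the space of
degree-`d` forms singular at every point of `S` has dimension exactly
`C(n + d, n) - r (n + 1)`, i.e. `ν_d(S) ∉ Ter_r(Vₙᵈ)`. -/
theorem first_veronese_terracini_noncollinear
    {K : Type} [Field K] [IsAlgClosed K] [CharZero K]
    (n d : ℕ) (hn : 2 ≤ n) (hd : 3 ≤ d)
    (S : Fin ((d + 3) / 2) → (Fin (n + 1) → K))
    (hS0 : ∀ i, S i ≠ 0)
    (hSd : ∀ i j, i ≠ j → ∀ c : K, S i ≠ c • S j)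
    (hncol : 3 ≤ Module.finrank K ↥(Submodule.span K (Set.range S))) :
    Module.finrank K ↥(dblVanish K (n + 1) d S) + ((d + 3) / 2) * (n + 1)
      = Nat.choose (n + d) n := by
  classical
  have hr3 : 3 ≤ (d + 3) / 2 := by omega
  have hrd : 2 * ((d + 3) / 2) ≤ d + 3 := by omega
  have hspan : ∀ a b : Fin ((d + 3) / 2), ∃ c, S c ∉ Submodule.span K {S a, S b} := by
    intro a b
    by_contra hcon
    push_neg at hcon
    have hle : Submodule.span K (Set.range S) ≤ Submodule.span K {S a, S b} := by
      rw [Submodule.span_le]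
      rintro _ ⟨c, rfl⟩
      exact hcon c
    have h1 : Module.finrank K (Submodule.span K (Set.range S)) ≤
        Module.finrank K (Submodule.span K ({S a, S b} : Set (Fin (n + 1) → K))) :=
      Submodule.finrank_mono hle
    have h2 : Module.finrank K (Submodule.span K ({S a, S b} : Set (Fin (n + 1) → K))) ≤ 2 := by
      refine (finrank_span_le_card ({S a, S b} : Set (Fin (n + 1) → K))).trans ?_
      rw [Set.toFinset_insert, Set.toFinset_singleton]
      exact (Finset.card_insert_le _ _).trans (by simp)
    omega
  have main : ∀ t : Fin ((d + 3) / 2) × Fin (n + 1) → K,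
      ∃ F : MvPolynomial (Fin (n + 1)) K, F.IsHomogeneous d ∧
      ∀ ai : Fin ((d + 3) / 2) × Fin (n + 1), aeval (S ai.1) (pderiv ai.2 F) = t ai := by
    intro t
    have hex := fun a : Fin ((d + 3) / 2) =>
      exists_singular_form hd hr3 hrd S hS0 hSd hspan a (fun i => t (a, i))
    choose F hFhom hFgrad0 hFgrada using hex
    refine ⟨∑ a, F a, MvPolynomial.IsHomogeneous.sum _ _ _ (fun a _ => hFhom a), ?_⟩
    rintro ⟨b, i⟩
    rw [map_sum, map_sum, Finset.sum_eq_single b]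
    · exact hFgrada b i
    · exact fun a _ hab => hFgrad0 a b (Ne.symm hab) i
    · simp
  haveI : FiniteDimensional K (homogeneousSubmodule (Fin (n + 1)) K d) :=
    finiteDimensional_homogeneousSubmodule (n + 1) d
  set Ψ : MvPolynomial (Fin (n + 1)) K →ₗ[K] ((Fin ((d + 3) / 2) × Fin (n + 1)) → K) :=
    LinearMap.pi (fun ai => (aeval (S ai.1)).toLinearMap ∘ₗ (pderiv ai.2).toLinearMap) with hΨ
  have hker : dblVanish K (n + 1) d S = homogeneousSubmodule (Fin (n + 1)) K d ⊓
      LinearMap.ker Ψ := by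
    rw [dblVanish, hΨ, LinearMap.ker_pi, iInf_prod]
  set L : (homogeneousSubmodule (Fin (n + 1)) K d) →ₗ[K]
      ((Fin ((d + 3) / 2) × Fin (n + 1)) → K) :=
    Ψ ∘ₗ (homogeneousSubmodule (Fin (n + 1)) K d).subtype with hL
  have hsurj : LinearMap.range L = ⊤ := by
    rw [LinearMap.range_eq_top]
    intro t
    obtain ⟨F, hFhom, hF⟩ := main t
    refine ⟨⟨F, hFhom⟩, funext fun ai => ?_⟩
    simpa [hL, hΨ, LinearMap.pi_apply] using hF ai
  have hrank := LinearMap.finrank_range_add_finrank_ker L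
  rw [hsurj] at hrank
  have htoprank : Module.finrank K
      (⊤ : Submodule K ((Fin ((d + 3) / 2) × Fin (n + 1)) → K)) = ((d + 3) / 2) * (n + 1) := by
    rw [finrank_top, Module.finrank_pi, Fintype.card_prod, Fintype.card_fin, Fintype.card_fin]
  have hkerL : LinearMap.ker L
      = Submodule.comap (homogeneousSubmodule (Fin (n + 1)) K d).subtype (LinearMap.ker Ψ) := by
    rw [hL, LinearMap.ker_comp]
  have hdbl : Module.finrank K (dblVanish K (n + 1) d S)
      = Module.finrank K (LinearMap.ker L) := by
    rw [hker, ← Submodule.map_comap_subtype, ← hkerL, Submodule.finrank_map_subtype_eq]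
  have hHrank : Module.finrank K (homogeneousSubmodule (Fin (n + 1)) K d)
      = Nat.choose (n + d) n := by
    rw [finrank_homogeneousSubmodule (n + 1) d]
    have h1 : n + 1 + d - 1 = n + d := by omega
    rw [h1, ← Nat.choose_symm (by omega : n ≤ n + d)]
    congr 1
    omega
  rw [htoprank, ← hdbl, hHrank] at hrank
  omega
end

section
/- Let K be an algebraically closed field of characteristic 0 and let n ≥ 3. If S is a set of 4 distinct points of ℙ^n not lying on a common plane (their representative vectors span a subspace of K^{n+1} of dimension ≥ 4), then the double points 2S impose independent conditions on cubic forms: the subspace of homogeneous degree-3 forms in x_0,…,x_n whose first-order partial derivatives all vanish at every point of S has dimension exactly binom(n+3, 3) − 4(n+1). (Equivalently, ν_3(S) ∉ Ter_4(V_n^3).) -/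
open MvPolynomial

noncomputable def degreeEquivSym (α : Type*) [DecidableEq α] (d : ℕ) :
    {m : α →₀ ℕ // m ∈ {m : α →₀ ℕ | m.degree = d}} ≃ Sym α d where
  toFun m := ⟨Finsupp.toMultiset m.1, by
    rw [Finsupp.card_toMultiset]; exact m.2⟩
  invFun s := ⟨Multiset.toFinsupp s.1, by
    show Finsupp.degree _ = d
    rw [show (Finsupp.degree : (α →₀ ℕ) → ℕ) = fun f => f.sum fun _ => id from rfl]
    simpa using s.2⟩
  left_inv m := by simp
  right_inv s := Subtype.ext (by simp)

lemma finrank_homogeneous (K : Type*) [Field K] (N d : ℕ) :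
    Module.finrank K (homogeneousSubmodule (Fin N) K d) = (N + d - 1).choose d := by
  rw [show homogeneousSubmodule (Fin N) K d
      = restrictSupport K {m : Fin N →₀ ℕ | m.degree = d} from
    homogeneousSubmodule_eq_finsupp_supported (Fin N) K d]
  haveI : Fintype {m : Fin N →₀ ℕ // m ∈ {m : Fin N →₀ ℕ | m.degree = d}} :=
    Fintype.ofEquiv _ (degreeEquivSym (Fin N) d).symm
  rw [Module.finrank_eq_card_basis (basisRestrictSupport K _)]
  rw [Fintype.card_congr (degreeEquivSym (Fin N) d), Sym.card_sym_eq_multichoose,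
    Nat.multichoose_eq, Fintype.card_fin]

lemma fd_homogeneous (K : Type*) [Field K] (N d : ℕ) :
    FiniteDimensional K (homogeneousSubmodule (Fin N) K d) := by
  rw [show homogeneousSubmodule (Fin N) K d
      = restrictSupport K {m : Fin N →₀ ℕ | m.degree = d} from
    homogeneousSubmodule_eq_finsupp_supported (Fin N) K d]
  haveI : Fintype {m : Fin N →₀ ℕ // m ∈ {m : Fin N →₀ ℕ | m.degree = d}} :=
    Fintype.ofEquiv _ (degreeEquivSym (Fin N) d).symm
  exact Module.Finite.of_basis (basisRestrictSupport K _)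


/-- **Non-coplanar quadruples are not in `Ter₄` of the cubic Veronese variety.**  Let `n ≥ 3`.
If `S` is a set of `4` distinct points of `ℙⁿ` not lying on a common plane (their
representatives span a subspace of `K^{n+1}` of dimension `≥ 4`), then the double points `2S`
impose independent conditions on cubic forms: the space of cubic forms singular at every point
of `S` has dimension exactly `C(n + 3, 3) - 4 (n + 1)`, i.e. `ν₃(S) ∉ Ter₄(Vₙ³)`. -/
theorem second_terracini_cubic_noncoplanar
    {K : Type} [Field K] [IsAlgClosed K] [CharZero K]
    (n : ℕ) (hn : 3 ≤ n)
    (S : Fin 4 → (Fin (n + 1) → K))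
    (hS0 : ∀ i, S i ≠ 0)
    (hSd : ∀ i j, i ≠ j → ∀ c : K, S i ≠ c • S j)
    (hncop : 4 ≤ Module.finrank K ↥(Submodule.span K (Set.range S))) :
    Module.finrank K ↥(dblVanish K (n + 1) 3 S) + 4 * (n + 1)
      = Nat.choose (n + 3) 3 := by
  classical
  have li : LinearIndependent K S := by
    rw [linearIndependent_iff_card_eq_finrank_span]
    have h1 : Set.finrank K (Set.range S) ≤ Fintype.card (Fin 4) :=
      finrank_range_le_card S
    have h3 : 4 ≤ Set.finrank K (Set.range S) := by
      rw [Set.finrank]; exact hncop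
    have h4 : Fintype.card (Fin 4) = 4 := by simp
    omega
  have hs : LinearIndepOn K id (Set.range S) :=
    li.linearIndepOn_id
  set B := Module.Basis.extend hs with hB
  have hmem : ∀ a, S a ∈ hs.extend (Set.subset_univ _) :=
    fun a => hs.subset_extend _ ⟨a, rfl⟩
  set ℓ : Fin 4 → ((Fin (n + 1) → K) →ₗ[K] K) := fun a => B.coord ⟨S a, hmem a⟩ with hℓdef
  have hℓ : ∀ a b, ℓ a (S b) = if a = b then 1 else 0 := by
    intro a b
    have h1 : S b = B ⟨S b, hmem b⟩ := (Module.Basis.extend_apply_self hs ⟨S b, hmem b⟩).symm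
    have h2 : B.coord ⟨S a, hmem a⟩ (B ⟨S b, hmem b⟩) = if a = b then 1 else 0 := by
      rw [Module.Basis.coord_apply, Module.Basis.repr_self, Finsupp.single_apply]
      by_cases h : a = b
      · subst h; rw [if_pos rfl, if_pos rfl]
      · have hne : S b ≠ S a := fun e => h (li.injective e).symm
        rw [if_neg (fun e => hne (congrArg Subtype.val e)), if_neg h]
    calc ℓ a (S b) = B.coord ⟨S a, hmem a⟩ (B ⟨S b, hmem b⟩) := congrArg _ h1
    _ = if a = b then 1 else 0 := h2
  set c : Fin 4 → Fin (n + 1) → K := fun a j => ℓ a (fun k => if j = k then 1 else 0)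
    with hcdef
  set L : Fin 4 → MvPolynomial (Fin (n + 1)) K := fun a => ∑ j, C (c a j) * X j with hLdef
  have hLmem : ∀ a, L a ∈ homogeneousSubmodule (Fin (n + 1)) K 1 := by
    intro a
    refine Submodule.sum_mem _ fun j _ => ?_
    rw [mem_homogeneousSubmodule]
    simpa using (isHomogeneous_X K j).C_mul (c a j)
  have hLeval : ∀ a b, aeval (S b) (L a) = if a = b then 1 else 0 := by
    intro a b
    rw [← hℓ a b, (ℓ a).pi_apply_eq_sum_univ (S b), hLdef]
    simp only [map_sum, map_mul, aeval_C, aeval_X, smul_eq_mul]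
    refine Finset.sum_congr rfl fun x _ => ?_
    show c a x * S b x = S b x * c a x
    exact mul_comm _ _
  have hLp : ∀ a j, pderiv j (L a) = C (c a j) := by
    intro a j
    rw [hLdef]
    simp only [map_sum, pderiv_mul, pderiv_C, pderiv_X, zero_mul, zero_add]
    rw [Finset.sum_eq_single j]
    · simp
    · intro b _ hb
      simp [Pi.single_apply, hb]
    · simp
  set Φ : MvPolynomial (Fin (n + 1)) K →ₗ[K] (Fin 4 → Fin (n + 1) → K) :=
    LinearMap.pi (fun a => LinearMap.pi
      (fun i => (aeval (S a)).toLinearMap ∘ₗ (pderiv i).toLinearMap)) with hΦdef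
  have hΦapp : ∀ f b j, Φ f b j = aeval (S b) (pderiv j f) := fun _ _ _ => rfl
  have hker : dblVanish K (n + 1) 3 S
      = homogeneousSubmodule (Fin (n + 1)) K 3 ⊓ LinearMap.ker Φ := by
    rw [dblVanish, hΦdef, LinearMap.ker_pi]
    congr 1
    exact iInf_congr fun a => (LinearMap.ker_pi _).symm
  haveI : FiniteDimensional K (homogeneousSubmodule (Fin (n + 1)) K 3) :=
    fd_homogeneous K (n + 1) 3
  set Φ' := Φ.domRestrict (homogeneousSubmodule (Fin (n + 1)) K 3) with hΦ'def
  have hgΦ : ∀ a i, Φ (L a * (L a * X i))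
      = Pi.single (M := fun _ : Fin 4 => Fin (n + 1) → K) a ((2 * S a i) • c a + Pi.single i 1) := by
    intro a i
    funext b j
    rw [hΦapp]
    simp only [pderiv_mul, hLp, pderiv_X, map_add, map_mul, aeval_C, hLeval, aeval_X]
    rcases eq_or_ne a b with h | h
    · subst h
      simp only [if_true, apply_ite (MvPolynomial.aeval (S a)), map_one, map_zero,
        Pi.add_apply, Pi.smul_apply, smul_eq_mul, Pi.single_apply, Algebra.algebraMap_self,
        RingHom.id_apply, one_mul, mul_one]
      by_cases hij : i = j
      · subst hij; simp; ring
      · simp [hij, Ne.symm hij]; ring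
    · simp [h, Pi.single_apply, Ne.symm h]
  have hhΦ : ∀ a, Φ (L a * (L a * L a)) = Pi.single (M := fun _ : Fin 4 => Fin (n + 1) → K) a ((3 : K) • c a) := by
    intro a
    funext b j
    rw [hΦapp]
    simp only [pderiv_mul, hLp, map_add, map_mul, aeval_C, hLeval]
    rcases eq_or_ne a b with h | h
    · subst h
      simp only [if_true, Pi.single_apply, Pi.smul_apply, smul_eq_mul,
        Algebra.algebraMap_self, RingHom.id_apply, one_mul, mul_one]
      ring
    · simp [h, Pi.single_apply, Ne.symm h]
  have hgmem : ∀ a i, L a * (L a * X i) ∈ homogeneousSubmodule (Fin (n + 1)) K 3 := by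
    intro a i
    rw [mem_homogeneousSubmodule]
    have := ((hLmem a).mul ((hLmem a).mul (isHomogeneous_X K i)))
    simpa using this
  have hhmem : ∀ a, L a * (L a * L a) ∈ homogeneousSubmodule (Fin (n + 1)) K 3 := by
    intro a
    rw [mem_homogeneousSubmodule]
    have := ((hLmem a).mul ((hLmem a).mul (hLmem a)))
    simpa using this
  have hsingle : ∀ (a : Fin 4) (v : Fin (n + 1) → K),
      Pi.single (M := fun _ : Fin 4 => Fin (n + 1) → K) a v ∈ LinearMap.range Φ' := by
    intro a v
    have hc : Pi.single (M := fun _ : Fin 4 => Fin (n + 1) → K) a (c a) ∈ LinearMap.range Φ' := by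
      refine ⟨(3 : K)⁻¹ • ⟨_, hhmem a⟩, ?_⟩
      rw [map_smul]
      have h3 : Φ' ⟨_, hhmem a⟩ = Pi.single (M := fun _ : Fin 4 => Fin (n + 1) → K) a ((3 : K) • c a) := hhΦ a
      rw [h3, ← Pi.single_smul, smul_smul]
      norm_num
    have he : ∀ i : Fin (n + 1),
        Pi.single (M := fun _ : Fin 4 => Fin (n + 1) → K) a (Pi.single i (1 : K))
          ∈ LinearMap.range Φ' := by
      intro i
      have h1 : (Pi.single (M := fun _ : Fin 4 => Fin (n + 1) → K) a ((2 * S a i) • c a + Pi.single i 1) : Fin 4 → Fin (n + 1) → K)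
          ∈ LinearMap.range Φ' := ⟨⟨_, hgmem a i⟩, hgΦ a i⟩
      have h2 := Submodule.sub_mem _ h1 (Submodule.smul_mem _ (2 * S a i) hc)
      rwa [← Pi.single_smul, ← Pi.single_sub, add_sub_cancel_left] at h2
    have hv : Pi.single (M := fun _ : Fin 4 => Fin (n + 1) → K) a v
        = ∑ i, v i • Pi.single (M := fun _ : Fin 4 => Fin (n + 1) → K) a (Pi.single i (1 : K)) := by
      funext b j
      simp only [Finset.sum_apply, Pi.smul_apply, Pi.single_apply, smul_eq_mul]
      by_cases hb : b = a <;> simp [hb, Pi.single_apply, mul_ite, Finset.sum_ite_eq]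
    rw [hv]
    exact Submodule.sum_mem _ fun i _ => Submodule.smul_mem _ _ (he i)
  have hsurj : LinearMap.range Φ' = ⊤ := by
    rw [eq_top_iff]
    intro w _
    rw [← Finset.univ_sum_single w]
    exact Submodule.sum_mem _ fun a _ => hsingle a (w a)
  have hrn := LinearMap.finrank_range_add_finrank_ker Φ'
  rw [hsurj] at hrn
  have hker' : Module.finrank K ↥(dblVanish K (n + 1) 3 S)
      = Module.finrank K (LinearMap.ker Φ') := by
    rw [hker, ← Submodule.map_comap_subtype, Submodule.finrank_map_subtype_eq,
      LinearMap.ker_domRestrict]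
  have htop : Module.finrank K (⊤ : Submodule K (Fin 4 → Fin (n + 1) → K)) = 4 * (n + 1) := by
    rw [finrank_top, Module.finrank_pi_fintype]
    simp [Module.finrank_pi, Finset.sum_const, mul_comm]
  have hH : Module.finrank K (homogeneousSubmodule (Fin (n + 1)) K 3) = (n + 3).choose 3 := by
    have h := finrank_homogeneous K (n + 1) 3
    rwa [show n + 1 + 3 - 1 = n + 3 from by omega] at h
  rw [htop, hH] at hrn
  rw [hker']
  omega
end

section
/- (Second nonempty Terracini locus of cubic Veronese varieties, set-level characterization.) Let K be an algebraically closed field of characteristic 0 and let n ≥ 3. For a set S of 4 distinct points of ℙ^n, the double points 2S fail to impose independent conditions on degree-3 forms (equivalently, ν_3(S) ∈ Ter_4(V_n^3)) if and only if the 4 points are coplanar, i.e., their representative vectors lie in a subspace of K^{n+1} of dimension ≤ 3. -/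
open MvPolynomial

namespace TerracniAux

open Module Submodule Finset

variable {K : Type} [Field K]

/-! ### Dimension of the space of homogeneous polynomials -/

/-- Exponent vectors of total degree `d` correspond to multisets of size `d`. -/
noncomputable def degSymEquiv (m d : ℕ) : {f : Fin m →₀ ℕ | f.degree = d} ≃ Sym (Fin m) d where
  toFun f := ⟨Finsupp.toMultiset f.1, by
    rw [Finsupp.card_toMultiset]
    exact f.2⟩
  invFun s := ⟨Multiset.toFinsupp (s : Multiset (Fin m)), by
    have h : Multiset.card (Finsupp.toMultiset (Multiset.toFinsupp (s : Multiset (Fin m)))) = d := by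
      rw [Multiset.toFinsupp_toMultiset]; exact s.2
    rw [Finsupp.card_toMultiset] at h
    exact h⟩
  left_inv f := Subtype.ext (Finsupp.toMultiset_toFinsupp f.1)
  right_inv s := Subtype.ext (Multiset.toFinsupp_toMultiset _)

noncomputable instance (m d : ℕ) : Fintype {f : Fin m →₀ ℕ | f.degree = d} :=
  Fintype.ofEquiv _ (degSymEquiv m d).symm

lemma card_degSet (m d : ℕ) :
    Fintype.card {f : Fin m →₀ ℕ | f.degree = d} = (m + d - 1).choose d := by
  rw [Fintype.card_congr (degSymEquiv m d), Sym.card_sym_eq_choose, Fintype.card_fin]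

/-- The space of homogeneous polynomials as a finsupp space. -/
noncomputable def homogLinearEquiv (m d : ℕ) :
    (homogeneousSubmodule (Fin m) K d) ≃ₗ[K] ({f : Fin m →₀ ℕ | f.degree = d} →₀ K) :=
  (LinearEquiv.ofEq _ _ (homogeneousSubmodule_eq_finsupp_supported (Fin m) K d)).trans
    (AddMonoidAlgebra.supportedEquivFinsupp _)

instance (m d : ℕ) : FiniteDimensional K (homogeneousSubmodule (Fin m) K d) :=
  Module.Finite.equiv (homogLinearEquiv (K := K) m d).symm

lemma finrank_homog (m d : ℕ) :
    finrank K (homogeneousSubmodule (Fin m) K d) = (m + d - 1).choose d := by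
  rw [(homogLinearEquiv (K := K) m d).finrank_eq, finrank_finsupp_self, card_degSet]

/-! ### Dual families -/

lemma exists_dual {m N : ℕ} (v : Fin m → (Fin N → K)) (hv : LinearIndependent K v) :
    ∃ L : Fin m → Fin N → K, ∀ a b, (∑ j, L a j * v b j) = if a = b then 1 else 0 := by
  classical
  obtain ⟨q, hq⟩ := Submodule.exists_isCompl (Submodule.span K (Set.range v))
  let B := Basis.span hv
  let π := Submodule.linearProjOfIsCompl _ q hq
  refine ⟨fun a j => B.coord a (π ((Pi.single j 1 : Fin N → K))), fun a b => ?_⟩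
  have h1 : (∑ j, B.coord a (π ((Pi.single j 1 : Fin N → K))) * v b j)
      = B.coord a (π (v b)) := by
    have hx : v b = ∑ j, v b j • (Pi.single j 1 : Fin N → K) := by
      funext t
      simp [Finset.sum_apply, Pi.single_apply, mul_comm]
    calc (∑ j, B.coord a (π ((Pi.single j 1 : Fin N → K))) * v b j)
        = B.coord a (π (∑ j, v b j • (Pi.single j 1 : Fin N → K))) := by
          rw [map_sum, map_sum]
          simp [mul_comm]
      _ = B.coord a (π (v b)) := by rw [← hx]
  rw [h1]
  have hb : v b ∈ Submodule.span K (Set.range v) := subset_span (Set.mem_range_self b)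
  have h2 : π (v b) = B b := by
    have h3 : π ((⟨v b, hb⟩ : Submodule.span K (Set.range v)) : Fin N → K) = ⟨v b, hb⟩ :=
      Submodule.linearProjOfIsCompl_apply_left hq ⟨v b, hb⟩
    exact h3.trans (Basis.span_apply hv b).symm
  rw [h2, Basis.coord_apply, B.repr_self, Finsupp.single_apply]
  simp [eq_comm]

/-! ### Chain rule -/

lemma pderiv_aeval_eq {m N : ℕ} (L : Fin N → MvPolynomial (Fin m) K) (k : Fin m)
    (f : MvPolynomial (Fin N) K) :
    pderiv k (aeval L f) = ∑ j, aeval L (pderiv j f) * pderiv k (L j) := by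
  classical
  induction f using MvPolynomial.induction_on with
  | C a => simp
  | add p q hp hq => simp only [map_add, add_mul, Finset.sum_add_distrib, hp, hq]
  | mul_X p i hp =>
    simp only [map_mul, aeval_X, pderiv_mul, hp]
    have hrw : ∀ j : Fin N,
        aeval L (pderiv j p * X i + p * pderiv j (X i : MvPolynomial (Fin N) K)) * pderiv k (L j)
          = aeval L (pderiv j p) * pderiv k (L j) * L i
            + aeval L p * aeval L (pderiv j (X i : MvPolynomial (Fin N) K)) * pderiv k (L j) := by
      intro j; simp only [map_add, map_mul, aeval_X]; ring
    simp only [pderiv_mul, hrw, Finset.sum_add_distrib]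
    congr 1
    · rw [Finset.sum_mul]
    · rw [Finset.sum_eq_single i]
      · simp
      · intro j _ hji
        rw [pderiv_X_of_ne (Ne.symm hji)]
        simp
      · intro h; exact absurd (Finset.mem_univ i) h

/-! ### The conditions map -/

/-- The linear map collecting all first-order partial derivatives at the points of `S`. -/
noncomputable def Phi {N : ℕ} {ι : Type} (S : ι → Fin N → K) :
    MvPolynomial (Fin N) K →ₗ[K] ((ι × Fin N) → K) :=
  LinearMap.pi fun ai => (aeval (S ai.1)).toLinearMap ∘ₗ (pderiv ai.2).toLinearMap

lemma Phi_apply {N : ℕ} {ι : Type} (S : ι → Fin N → K) (f : MvPolynomial (Fin N) K)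
    (a : ι) (i : Fin N) : Phi S f (a, i) = aeval (S a) (pderiv i f) := rfl

lemma dblVanish_eq {N d : ℕ} {ι : Type} (S : ι → Fin N → K) :
    dblVanish K N d S = homogeneousSubmodule (Fin N) K d ⊓ LinearMap.ker (Phi S) := by
  unfold dblVanish
  congr 1
  ext f
  simp only [Submodule.mem_iInf, LinearMap.mem_ker, LinearMap.coe_comp, Function.comp_apply,
    AlgHom.toLinearMap_apply, Derivation.coeFn_coe]
  constructor
  · intro h
    funext ai
    exact h ai.1 ai.2
  · intro h a i
    exact congrFun h (a, i)

/-! ### Linearly independent points: the conditions map is surjective -/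

lemma surj_of_linIndep [CharZero K] {N : ℕ} (S : Fin 4 → Fin N → K)
    (hS : LinearIndependent K S) :
    Function.Surjective ((Phi S).domRestrict (homogeneousSubmodule (Fin N) K 3)) := by
  classical
  obtain ⟨L, hL⟩ := exists_dual S hS
  -- the linear form dual to the point `S a`
  set Λ : Fin 4 → MvPolynomial (Fin N) K := fun a => ∑ j, C (L a j) * X j with hΛ
  have hΛhom : ∀ a, (Λ a).IsHomogeneous 1 := by
    intro a
    exact IsHomogeneous.sum _ _ _ fun j _ => isHomogeneous_C_mul_X (L a j) j
  have hΛd : ∀ a k, pderiv k (Λ a) = C (L a k) := by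
    intro a k
    rw [hΛ, map_sum]
    rw [Finset.sum_eq_single k]
    · simp
    · intro j _ hjk
      rw [pderiv_C_mul, pderiv_X_of_ne hjk, mul_zero]
    · intro h; exact absurd (Finset.mem_univ k) h
  have hΛe : ∀ a b, aeval (S b) (Λ a) = if a = b then 1 else 0 := by
    intro a b
    rw [hΛ, map_sum, ← hL a b]
    simp
  -- the cubic producing a single condition
  set g : Fin 4 → Fin N → MvPolynomial (Fin N) K := fun a i =>
    Λ a * Λ a * X i - C (2 * S a i * (3 : K)⁻¹) * (Λ a * Λ a * Λ a) with hg
  have hghom : ∀ a i, g a i ∈ homogeneousSubmodule (Fin N) K 3 := by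
    intro a i
    rw [mem_homogeneousSubmodule]
    apply IsHomogeneous.sub
    · have h := ((hΛhom a).mul (hΛhom a)).mul (isHomogeneous_X K i)
      exact h
    · have h := (isHomogeneous_C (Fin N) (2 * S a i * (3 : K)⁻¹)).mul
        (((hΛhom a).mul (hΛhom a)).mul (hΛhom a))
      exact h
  have hPhig : ∀ a i, Phi S (g a i) = Pi.single (a, i) 1 := by
    intro a i
    funext bj
    obtain ⟨b, j⟩ := bj
    rw [Phi_apply, hg]
    simp only [map_sub, pderiv_mul, hΛd, pderiv_C_mul, map_add, map_mul, aeval_C, hΛe,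
      aeval_X, pderiv_X, Pi.single_apply, Prod.ext_iff]
    have h3 : (3 : K) ≠ 0 := three_ne_zero
    by_cases hab : a = b
    · subst hab
      by_cases hij : j = i
      · subst hij
        simp only [if_true, pderiv_C, Algebra.algebraMap_self, RingHom.id_apply, if_pos rfl, and_self, mul_ite, mul_one, mul_zero, ite_mul, apply_ite (aeval (S a)),
          map_one, map_zero]
        field_simp
        ring
      · simp only [if_true, pderiv_C, Algebra.algebraMap_self, RingHom.id_apply, if_pos rfl, hij, and_false, if_false, mul_ite, mul_one, mul_zero, ite_mul,
          apply_ite (aeval (S a)), map_one, map_zero]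
        field_simp
        rw [if_neg (fun h => hij h.symm)]
        ring
    · simp [hab, Ne.symm hab, mul_ite, apply_ite (aeval (S b))]
  -- now surjectivity
  intro t
  refine ⟨⟨∑ ai : Fin 4 × Fin N, t ai • g ai.1 ai.2, ?_⟩, ?_⟩
  · exact Submodule.sum_mem _ fun ai _ => Submodule.smul_mem _ _ (hghom ai.1 ai.2)
  · show Phi S (∑ ai : Fin 4 × Fin N, t ai • g ai.1 ai.2) = t
    rw [map_sum]
    funext bj
    simp only [Finset.sum_apply, map_smul, Pi.smul_apply, hPhig, smul_eq_mul,
      Pi.single_apply, mul_ite, mul_one, mul_zero]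
    rw [Finset.sum_ite_eq Finset.univ bj t]
    simp

/-! ### Coplanar points: the conditions map is not surjective -/

lemma not_surj_of_coplanar [CharZero K] {N : ℕ} (S : Fin 4 → Fin N → K) (h0 : S 0 ≠ 0)
    (hsp : finrank K (Submodule.span K (Set.range S)) ≤ 3) :
    ¬ Function.Surjective ((Phi S).domRestrict (homogeneousSubmodule (Fin N) K 3)) := by
  classical
  intro hsurj
  set W := Submodule.span K (Set.range S) with hW
  have hSa : ∀ a, S a ∈ W := fun a => subset_span (Set.mem_range_self a)
  set m := finrank K W with hm
  have hm1 : 1 ≤ m := by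
    have hnt : Nontrivial W := ⟨⟨S 0, hSa 0⟩, 0, by simpa [Subtype.ext_iff] using h0⟩
    have := Module.finrank_pos_iff (R := K) (M := W) |>.mpr hnt
    omega
  let B : Basis (Fin m) K W := Module.finBasis K W
  let b : Fin m → (Fin N → K) := fun k => (B k : Fin N → K)
  have hb : LinearIndependent K b :=
    B.linearIndependent.map' W.subtype (Submodule.ker_subtype W)
  let c : Fin 4 → Fin m → K := fun a k => B.repr ⟨S a, hSa a⟩ k
  have hc : ∀ a j, S a j = ∑ k, c a k * b k j := by
    intro a j
    have h := B.sum_repr ⟨S a, hSa a⟩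
    have h2 : ((∑ k, c a k • B k : W) : Fin N → K) = S a := by rw [h]
    rw [← h2]
    simp [b, Finset.sum_apply, Submodule.coe_sum]
  obtain ⟨dL, hdL⟩ := exists_dual b hb
  let Lp : Fin N → MvPolynomial (Fin m) K := fun j => ∑ k, C (b k j) * X k
  have hLphom : ∀ j, (Lp j).IsHomogeneous 1 := fun j =>
    IsHomogeneous.sum _ _ _ fun k _ => isHomogeneous_C_mul_X (b k j) k
  have hLpd : ∀ k j, pderiv k (Lp j) = C (b k j) := by
    intro k j
    rw [show Lp j = ∑ k, C (b k j) * X k from rfl, map_sum]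
    rw [Finset.sum_eq_single k]
    · simp
    · intro l _ hlk
      rw [pderiv_C_mul, pderiv_X_of_ne hlk, mul_zero]
    · intro h; exact absurd (Finset.mem_univ k) h
  have hLpe : ∀ a j, aeval (c a) (Lp j) = S a j := by
    intro a j
    rw [show Lp j = ∑ k, C (b k j) * X k from rfl, map_sum, hc a j]
    simp [mul_comm]
  -- surjectivity of the small conditions map
  have hms : Function.Surjective ((Phi c).domRestrict (homogeneousSubmodule (Fin m) K 3)) := by
    intro t
    obtain ⟨⟨f, hf⟩, hft⟩ := hsurj (fun aj => ∑ k, t (aj.1, k) * dL k aj.2)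
    have hft' : ∀ a j, aeval (S a) (pderiv j f) = ∑ k, t (a, k) * dL k j := by
      intro a j
      have h := congrFun hft (a, j)
      simpa [LinearMap.domRestrict_apply, Phi_apply] using h
    refine ⟨⟨aeval Lp f, ?_⟩, ?_⟩
    · rw [mem_homogeneousSubmodule]
      have := ((mem_homogeneousSubmodule 3 f).mp hf).aeval Lp hLphom
      simpa using this
    · show Phi c (aeval Lp f) = t
      funext ak
      obtain ⟨a, k⟩ := ak
      rw [Phi_apply, pderiv_aeval_eq]
      rw [map_sum]
      have hterm : ∀ j, aeval (c a) (aeval Lp (pderiv j f) * pderiv k (Lp j))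
          = b k j * aeval (S a) (pderiv j f) := by
        intro j
        rw [map_mul, hLpd, aeval_C]
        have hSfun : (fun j' => aeval (c a) (Lp j')) = S a := funext (hLpe a)
        have hcomp : aeval (c a) (aeval Lp (pderiv j f)) = aeval (S a) (pderiv j f) := by
          rw [comp_aeval_apply, hSfun]
        rw [hcomp]
        simp [Algebra.algebraMap_self, mul_comm]
      rw [Finset.sum_congr rfl fun j _ => hterm j]
      have : ∑ j, b k j * aeval (S a) (pderiv j f)
          = ∑ j, b k j * ∑ k', t (a, k') * dL k' j := by
        exact Finset.sum_congr rfl fun j _ => by rw [hft']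
      rw [this]
      have hswap : ∑ j, b k j * ∑ k', t (a, k') * dL k' j
          = ∑ k', t (a, k') * ∑ j, dL k' j * b k j := by
        simp_rw [Finset.mul_sum]
        rw [Finset.sum_comm]
        exact Finset.sum_congr rfl fun k' _ => Finset.sum_congr rfl fun j _ => by ring
      rw [hswap]
      rw [Finset.sum_congr rfl fun k' _ => by rw [hdL k' k]]
      simp
  -- dimension contradiction
  have hle := LinearMap.finrank_range_le ((Phi c).domRestrict (homogeneousSubmodule (Fin m) K 3))
  have htop : LinearMap.range ((Phi c).domRestrict (homogeneousSubmodule (Fin m) K 3)) = ⊤ :=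
    LinearMap.range_eq_top.mpr hms
  rw [htop, finrank_top, Module.finrank_pi] at hle
  rw [finrank_homog] at hle
  simp only [Fintype.card_prod, Fintype.card_fin] at hle
  have hm3 : m ≤ 3 := hsp
  have hcase : m = 1 ∨ m = 2 ∨ m = 3 := by omega
  rcases hcase with h | h | h <;> rw [h] at hle <;> exact absurd hle (by decide)

end TerracniAux

set_option maxHeartbeats 1000000 in
set_option synthInstance.maxHeartbeats 400000 in
/-- **Second nonempty Terracini locus of cubic Veronese varieties (set-level
characterization).**  Let `n ≥ 3`.  For a set `S` of `4` distinct points of `ℙⁿ`, the double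
points `2S` fail to impose independent conditions on cubic forms (equivalently
`ν₃(S) ∈ Ter₄(Vₙ³)`, i.e. the space of cubic forms singular at every point of `S` has
dimension `> C(n + 3, 3) - 4 (n + 1)`) if and only if the four points are coplanar (their
representatives lie in a subspace of `K^{n+1}` of dimension `≤ 3`). -/
theorem second_terracini_cubic_iff_coplanar
    {K : Type} [Field K] [IsAlgClosed K] [CharZero K]
    (n : ℕ) (hn : 3 ≤ n)
    (S : Fin 4 → (Fin (n + 1) → K))
    (hS0 : ∀ i, S i ≠ 0)
    (hSd : ∀ i j, i ≠ j → ∀ c : K, S i ≠ c • S j) :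
    Nat.choose (n + 3) 3 <
        Module.finrank K ↥(dblVanish K (n + 1) 3 S) + 4 * (n + 1) ↔
      Module.finrank K ↥(Submodule.span K (Set.range S)) ≤ 3 := by
  classical
  open TerracniAux Module in
  set H := homogeneousSubmodule (Fin (n + 1)) K 3 with hHdef
  set Φ' := (Phi S).domRestrict H with hPhidef
  have hdbl : dblVanish K (n + 1) 3 S = Submodule.map H.subtype (LinearMap.ker Φ') := by
    rw [dblVanish_eq, hPhidef, LinearMap.ker_domRestrict, Submodule.map_comap_subtype]
  have hfr : finrank K (dblVanish K (n + 1) 3 S) = finrank K (LinearMap.ker Φ') := by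
    rw [hdbl]
    exact (Submodule.equivMapOfInjective _ (Submodule.injective_subtype H)
      (LinearMap.ker Φ')).finrank_eq.symm
  have hrank := LinearMap.finrank_range_add_finrank_ker Φ'
  have hH : finrank K H = (n + 3).choose 3 := by
    rw [hHdef, finrank_homog]
    have harith : n + 1 + 3 - 1 = n + 3 := by omega
    rw [harith]
  have hcod : finrank K ((Fin 4 × Fin (n + 1)) → K) = 4 * (n + 1) := by
    rw [Module.finrank_pi]
    simp
  have hrle : finrank K (LinearMap.range Φ') ≤ 4 * (n + 1) := by
    rw [← hcod]
    exact Submodule.finrank_le _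
  constructor
  · intro hlt
    by_contra hcop
    have h4 : LinearIndependent K S := by
      rw [linearIndependent_iff_card_eq_finrank_span]
      have hle4 : (Set.range S).finrank K ≤ 4 := by
        simpa using finrank_range_le_card S
      have hge : 4 ≤ (Set.range S).finrank K := by
        have : ¬ (Set.range S).finrank K ≤ 3 := hcop
        omega
      simp only [Fintype.card_fin]
      omega
    have hsurj := surj_of_linIndep S h4
    have htop : LinearMap.range Φ' = ⊤ := LinearMap.range_eq_top.mpr hsurj
    rw [htop, finrank_top, hcod] at hrank
    omega
  · intro hcop
    have hns := not_surj_of_coplanar S (hS0 0) hcop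
    have hne : finrank K (LinearMap.range Φ') ≠ 4 * (n + 1) := by
      intro he
      apply hns
      have : LinearMap.range Φ' = ⊤ :=
        Submodule.eq_top_of_finrank_eq (by rw [he, hcod])
      exact LinearMap.range_eq_top.mp this
    omega
end
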